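/- arXiv:2011.10076 — 9 statements merged into one kernel-verified Lean document; each statement's English description precedes it below -/
import Mathlib

section
/- If π⁺ is the proximal update π⁺ ∈ argmin_{π ∈ Π} {−π y⁺ + f*(π) + τ D_{f*}(πᵗ, π)} where πᵗ = f'(ȳᵗ) ∈ ∂f(ȳᵗ), then π⁺ ∈ ∂f(ȳ⁺) with ȳ⁺ = (y⁺ + τ ȳᵗ)/(1 + τ). In other words, the Bregman proximal step in the dual equals a subgradient evaluation of f at the convex combination ȳ⁺. -/
open Finset

/-- If `π⁺` is the Bregman proximal update
`π⁺ ∈ argmin_{π ∈ Π} {−π y⁺ + f*(π) + τ D_{f*}(πᵗ, π)}` where `πᵗ = f'(ȳᵗ) ∈ ∂f(ȳᵗ)`,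
then `π⁺ ∈ ∂f(ȳ⁺)` with `ȳ⁺ = (y⁺ + τ ȳᵗ)/(1 + τ)`: the dual Bregman proximal step
equals a subgradient evaluation of `f` at the convex combination `ȳ⁺`. -/
theorem stmt_2 {m : ℕ}
    (f : (Fin m → ℝ) → ℝ) (fstar : (Fin m → ℝ) → ℝ) (Pdom : Set (Fin m → ℝ))
    (τ : ℝ) (hτ : 0 ≤ τ)
    (ybart yplus : Fin m → ℝ) (πt πplus : Fin m → ℝ)
    (hπtmem : πt ∈ Pdom)
    -- πᵗ = f'(ȳᵗ) ∈ ∂f(ȳᵗ)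
    (hπt : ∀ y, f y ≥ f ybart + ∑ i, πt i * (y i - ybart i))
    -- conjugate duality: maximizers of π ↦ π y − f*(π) over Π are exactly the
    -- subgradients of f at y (valid since f is proper closed convex)
    (hconj : ∀ (y : Fin m → ℝ) (π : Fin m → ℝ), π ∈ Pdom →
      ((∀ π' ∈ Pdom, (∑ i, π' i * y i) - fstar π' ≤ (∑ i, π i * y i) - fstar π) ↔
        ∀ y', f y' ≥ f y + ∑ i, π i * (y' i - y i)))
    -- D_{f*}(πᵗ, ·), the Bregman distance of f* with subgradient selection (f*)'(πᵗ) = ȳᵗ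
    (D : (Fin m → ℝ) → ℝ)
    (hD : ∀ π, D π = fstar π - fstar πt - ∑ i, ybart i * (π i - πt i))
    -- π⁺ minimizes the proximal objective over Π
    (hmem : πplus ∈ Pdom)
    (hmin : ∀ π ∈ Pdom,
      (-(∑ i, πplus i * yplus i) + fstar πplus + τ * D πplus) ≤
        (-(∑ i, π i * yplus i) + fstar π + τ * D π)) :
    ∀ y', f y' ≥ f (fun i => (yplus i + τ * ybart i) / (1 + τ)) +
      ∑ i, πplus i * (y' i - (yplus i + τ * ybart i) / (1 + τ)) := by
  have h1τ : (0:ℝ) < 1 + τ := by linarith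
  apply (hconj (fun i => (yplus i + τ * ybart i) / (1 + τ)) πplus hmem).mp
  intro π' hπ'
  have hS : ∀ π : Fin m → ℝ,
      (∑ i, π i * ((yplus i + τ * ybart i) / (1 + τ))) =
        ((∑ i, π i * yplus i) + τ * ∑ i, ybart i * π i) / (1 + τ) := by
    intro π
    rw [eq_div_iff (ne_of_gt h1τ), Finset.sum_mul, Finset.mul_sum,
      ← Finset.sum_add_distrib]
    apply Finset.sum_congr rfl
    intro i _
    field_simp
  have hB : ∀ π : Fin m → ℝ,
      (∑ i, ybart i * (π i - πt i)) = (∑ i, ybart i * π i) - ∑ i, ybart i * πt i := by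
    intro π
    simp [mul_sub, Finset.sum_sub_distrib]
  have h := hmin π' hπ'
  rw [hD, hD, hB, hB] at h
  have h' := (div_le_div_iff_of_pos_right h1τ).mpr h
  rw [hS, hS]
  rw [← sub_nonneg]
  have h2 : 0 ≤ ((∑ i, πplus i * yplus i + τ * ∑ i, ybart i * πplus i) / (1 + τ) - fstar πplus -
      ((∑ i, π' i * yplus i + τ * ∑ i, ybart i * π' i) / (1 + τ) - fstar π')) * (1 + τ) := by
    rw [sub_mul, sub_mul, sub_mul, div_mul_cancel₀ _ (ne_of_gt h1τ),
      div_mul_cancel₀ _ (ne_of_gt h1τ)]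
    nlinarith [h']
  nlinarith [h2, h1τ, mul_pos (mul_pos h1τ h1τ) h1τ]
end

section
/- Three-point inequality for Bregman proximal steps: if g : Y → ℝ is μ-strongly convex with respect to a Bregman distance V (i.e., g(y) − g(ȳ) − ⟨g'(ȳ), y − ȳ⟩ ≥ μV(ȳ, y) for all y, ȳ ∈ Y) and ŷ ∈ argmin_{y ∈ Y}{⟨π, y⟩ + g(y) + τ V(ȳ, y)}, then for all y ∈ Y: ⟨ŷ − y, π⟩ + g(ŷ) − g(y) ≤ τ V(ȳ, y) − (τ + μ) V(ŷ, y) − τ V(ȳ, ŷ). -/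
set_option maxHeartbeats 1000000
open InnerProductSpace

section Aux

-- 1-d gradient inequality for convex functions
lemma conv1d_grad_ineq {h : ℝ → ℝ} (hc : ConvexOn ℝ Set.univ h) {d a b : ℝ}
    (hd : HasDerivAt h d a) : h a + d * (b - a) ≤ h b := by
  rcases lt_trichotomy a b with hab | hab | hab
  · have := hc.le_slope_of_hasDerivAt (Set.mem_univ a) (Set.mem_univ b) hab hd
    rw [slope_def_field] at this
    have h2 := (le_div_iff₀ (sub_pos.2 hab)).mp this
    linarith
  · simp [hab]
  · have := hc.slope_le_of_hasDerivAt (Set.mem_univ b) (Set.mem_univ a) hab hd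
    rw [slope_def_field] at this
    have h2 := (div_le_iff₀ (sub_pos.2 hab)).mp this
    nlinarith

variable {E : Type*} [NormedAddCommGroup E] [InnerProductSpace ℝ E] [CompleteSpace E]

lemma grad_ineq {ω : E → ℝ} {ω' : E → E} (hω : ∀ x, HasGradientAt ω (ω' x) x)
    (hc : ConvexOn ℝ Set.univ ω) (a b : E) :
    ω a + (inner ℝ (ω' a) (b - a) : ℝ) ≤ ω b := by
  set L : ℝ → E := fun t => a + t • (b - a) with hL
  have hLd : ∀ t : ℝ, HasDerivAt L (b - a) t := by
    intro t
    simpa [hL] using ((hasDerivAt_id t).smul_const (b - a)).const_add a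
  have hh : HasDerivAt (fun t => ω (L t)) (inner ℝ (ω' a) (b - a) : ℝ) 0 := by
    have h1 : HasFDerivAt ω (toDual ℝ E (ω' (L 0))) (L 0) := hω (L 0)
    have := h1.comp_hasDerivAt 0 (hLd 0)
    simp only [toDual_apply_apply] at this
    rw [show L 0 = a by simp [hL]] at this
    exact this
  have hconv : ConvexOn ℝ Set.univ (fun t => ω (L t)) := by
    have := hc.comp_affineMap (AffineMap.lineMap a b : ℝ →ᵃ[ℝ] E)
    have heq : (fun t => ω (L t)) = ω ∘ (AffineMap.lineMap a b : ℝ →ᵃ[ℝ] E) := by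
      funext t
      simp only [hL, Function.comp, AffineMap.lineMap_apply, vsub_eq_sub, vadd_eq_add]
      rw [add_comm]
    rw [heq]
    simpa using this
  have := conv1d_grad_ineq hconv (b := 1) hh
  simpa [hL] using this

lemma hasDerivAt_line {ω : E → ℝ} {ω' : E → E} (hω : ∀ x, HasGradientAt ω (ω' x) x)
    (x v : E) (t : ℝ) :
    HasDerivAt (fun s : ℝ => ω (x + s • v)) (inner ℝ (ω' (x + t • v)) v : ℝ) t := by
  have hLd : HasDerivAt (fun s : ℝ => x + s • v) v t := by
    simpa using ((hasDerivAt_id t).smul_const v).const_add x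
  have h1 : HasFDerivAt ω (toDual ℝ E (ω' (x + t • v))) (x + t • v) := hω _
  have := h1.comp_hasDerivAt t hLd
  simp only [toDual_apply_apply] at this
  exact this

end Aux



/-- Three-point inequality for Bregman proximal steps: if `g : Y → ℝ` is `μ`-strongly
convex with respect to a Bregman distance `V` generated by a convex differentiable `ω`
and `ŷ ∈ argmin_{y ∈ Y} {⟨π, y⟩ + g(y) + τ V(ȳ, y)}`, then for all `y ∈ Y`:
`⟨ŷ − y, π⟩ + g(ŷ) − g(y) ≤ τ V(ȳ, y) − (τ + μ) V(ŷ, y) − τ V(ȳ, ŷ)`. -/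
theorem stmt_4 {n : ℕ}
    (Y : Set (EuclideanSpace ℝ (Fin n))) (hYconv : Convex ℝ Y) (hYclosed : IsClosed Y)
    (ω : EuclideanSpace ℝ (Fin n) → ℝ)
    (ω' : EuclideanSpace ℝ (Fin n) → EuclideanSpace ℝ (Fin n))
    (hω : ∀ x, HasGradientAt ω (ω' x) x)
    (hωconv : ConvexOn ℝ Set.univ ω)
    (V : EuclideanSpace ℝ (Fin n) → EuclideanSpace ℝ (Fin n) → ℝ)
    (hV : ∀ x y, V x y = ω y - ω x - (inner ℝ (ω' x) (y - x) : ℝ))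
    (g : EuclideanSpace ℝ (Fin n) → ℝ)
    (g' : EuclideanSpace ℝ (Fin n) → EuclideanSpace ℝ (Fin n))
    (μ τ : ℝ) (hμ : 0 ≤ μ) (hτ : 0 ≤ τ)
    -- g is μ-strongly convex with respect to V (with subgradient selection g')
    (hg : ∀ y ∈ Y, ∀ ybar ∈ Y,
      g y - g ybar - (inner ℝ (g' ybar) (y - ybar) : ℝ) ≥ μ * V ybar y)
    (π ybar : EuclideanSpace ℝ (Fin n)) (hybar : ybar ∈ Y)
    (yhat : EuclideanSpace ℝ (Fin n)) (hyhat : yhat ∈ Y)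
    -- ŷ minimizes ⟨π, y⟩ + g(y) + τ V(ȳ, y) over Y
    (hmin : ∀ y ∈ Y,
      (inner ℝ π yhat : ℝ) + g yhat + τ * V ybar yhat ≤
        (inner ℝ π y : ℝ) + g y + τ * V ybar y) :
    ∀ y ∈ Y, (inner ℝ (yhat - y) π : ℝ) + g yhat - g y ≤
      τ * V ybar y - (τ + μ) * V yhat y - τ * V ybar yhat := by
  intro y hy
  set v : EuclideanSpace ℝ (Fin n) := y - yhat with hv
  set L0 : ℝ := (inner ℝ (ω' yhat) v : ℝ) with hL0
  set A : ℝ → ℝ := fun s =>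
    (inner ℝ π v : ℝ) + (g y - g yhat)
      - μ * (V yhat y - V yhat (yhat + s • v)
          - (1 - s) * ((ω (yhat + (2 * s) • v) - ω (yhat + s • v)) / s - L0))
      + τ * ((ω (yhat + s • v) - ω yhat) / s - (inner ℝ (ω' ybar) v : ℝ)) with hA
  -- Step 1: A s ≥ 0 for s ∈ Ioc 0 1
  have claim1 : ∀ s ∈ Set.Ioc (0:ℝ) 1, 0 ≤ A s := by
    intro s hs
    obtain ⟨hs0, hs1⟩ := hs
    have hs1' : (0:ℝ) ≤ 1 - s := by linarith
    set ys : EuclideanSpace ℝ (Fin n) := yhat + s • v with hys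
    have hysY : ys ∈ Y := by
      have h := hYconv hyhat hy hs1' hs0.le (by ring)
      have heq : (1 - s) • yhat + s • y = ys := by rw [hys, hv]; module
      rwa [heq] at h
    -- subgradient inequalities
    have hgy := hg y hy ys hysY
    have hgyh := hg yhat hyhat ys hysY
    have e1 : (inner ℝ (g' ys) (y - ys) : ℝ) = (1 - s) * (inner ℝ (g' ys) v : ℝ) := by
      rw [show y - ys = (1 - s) • v by rw [hys, hv]; module, real_inner_smul_right]
    have e2 : (inner ℝ (g' ys) (yhat - ys) : ℝ) = (-s) * (inner ℝ (g' ys) v : ℝ) := by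
      rw [show yhat - ys = (-s) • v by rw [hys]; module, real_inner_smul_right]
    rw [e1] at hgy
    rw [e2] at hgyh
    have hVpos : 0 ≤ V ys yhat := by
      rw [hV]; have := grad_ineq hω hωconv ys yhat; linarith
    have hVpos2 : 0 ≤ V ys y := by
      rw [hV]; have := grad_ineq hω hωconv ys y; linarith
    -- convex combination bound on g ys
    have c1 : g ys - g yhat ≤ s * (g y - g yhat) - μ * s * V ys y := by
      have m1 := mul_le_mul_of_nonneg_left hgy hs0.le
      have m2 := mul_le_mul_of_nonneg_left hgyh hs1'
      have m3 := mul_nonneg hμ hVpos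
      nlinarith [m1, m2, m3, mul_nonneg hs1' m3]
    -- minimality expansion
    have hmin' := hmin ys hysY
    have eπ : (inner ℝ π ys : ℝ) = (inner ℝ π yhat : ℝ) + s * (inner ℝ π v : ℝ) := by
      rw [hys, inner_add_right, real_inner_smul_right]
    have eV : V ybar ys - V ybar yhat = ω ys - ω yhat - s * (inner ℝ (ω' ybar) v : ℝ) := by
      rw [hV, hV, show ys - ybar = (yhat - ybar) + s • v by rw [hys]; module,
        inner_add_right, real_inner_smul_right]
      ring
    have key : 0 ≤ s * (inner ℝ π v : ℝ) + (g ys - g yhat)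
        + τ * (ω ys - ω yhat - s * (inner ℝ (ω' ybar) v : ℝ)) := by
      rw [eπ] at hmin'
      have m4 : τ * (V ybar ys - V ybar yhat)
          = τ * (ω ys - ω yhat - s * (inner ℝ (ω' ybar) v : ℝ)) := by rw [eV]
      nlinarith [hmin', m4]
    -- three-point identity for V ys y and bound on inner (ω' ys) v
    have hd : V ys y = V yhat y - V yhat ys
        - (1 - s) * ((inner ℝ (ω' ys) v : ℝ) - L0) := by
      rw [hV, hV, hV, show y - ys = (1 - s) • v by rw [hys, hv]; module,
        show ys - yhat = s • v by rw [hys]; module,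
        show y - yhat = v by rw [hv],
        real_inner_smul_right, real_inner_smul_right, hL0]
      ring
    have he : (inner ℝ (ω' ys) v : ℝ) ≤ (ω (yhat + (2 * s) • v) - ω ys) / s := by
      have h := grad_ineq hω hωconv ys (yhat + (2 * s) • v)
      rw [show yhat + (2 * s) • v - ys = s • v by rw [hys]; module,
        real_inner_smul_right] at h
      rw [le_div_iff₀ hs0]
      nlinarith [h]
    have hW : V yhat y - V yhat ys
        - (1 - s) * ((ω (yhat + (2 * s) • v) - ω ys) / s - L0) ≤ V ys y := by
      rw [hd]
      have := mul_le_mul_of_nonneg_left he hs1'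
      linarith [this]
    have key2 : 0 ≤ s * (inner ℝ π v : ℝ) + s * (g y - g yhat)
        - μ * s * (V yhat y - V yhat ys
          - (1 - s) * ((ω (yhat + (2 * s) • v) - ω ys) / s - L0))
        + τ * (ω ys - ω yhat - s * (inner ℝ (ω' ybar) v : ℝ)) := by
      have m5 := mul_le_mul_of_nonneg_left hW (mul_nonneg hμ hs0.le)
      nlinarith [key, c1, m5]
    have hsA : s * A s = s * (inner ℝ π v : ℝ) + s * (g y - g yhat)
        - μ * s * (V yhat y - V yhat ys
          - (1 - s) * ((ω (yhat + (2 * s) • v) - ω ys) / s - L0))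
        + τ * (ω ys - ω yhat - s * (inner ℝ (ω' ybar) v : ℝ)) := by
      rw [hA]
      field_simp
      ring
    by_contra hcon
    push_neg at hcon
    have hneg : s * A s < 0 := mul_neg_of_pos_of_neg hs0 hcon
    rw [hsA] at hneg
    linarith [key2]
  -- Step 2: limit of A as s → 0⁺
  set f : ℝ → ℝ := fun s => ω (yhat + s • v) with hf
  have hfd : HasDerivAt f L0 0 := by
    have h0 := hasDerivAt_line hω yhat v 0
    simp only [zero_smul, add_zero] at h0
    exact h0
  have t1 : Filter.Tendsto (fun s => (f s - f 0) / s) (nhdsWithin 0 (Set.Ioi 0)) (nhds L0) := by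
    have h := hasDerivAt_iff_tendsto_slope.mp hfd
    have heq : (fun s => (f s - f 0) / s) = slope f 0 := by
      funext s; rw [slope_def_field]; simp
    rw [heq]
    exact h.mono_left (nhdsWithin_mono 0 (fun s hs => by simpa using ne_of_gt hs))
  have tdouble : Filter.Tendsto (fun s : ℝ => 2 * s) (nhdsWithin 0 (Set.Ioi 0))
      (nhdsWithin 0 (Set.Ioi 0)) := by
    have h1 : Filter.Tendsto (fun s : ℝ => 2 * s) (nhds 0) (nhds (2 * 0)) :=
      (continuous_const.mul continuous_id).tendsto 0
    rw [mul_zero] at h1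
    rw [tendsto_nhdsWithin_iff]
    refine ⟨h1.mono_left nhdsWithin_le_nhds, ?_⟩
    filter_upwards [self_mem_nhdsWithin] with s hs
    exact mul_pos two_pos (Set.mem_Ioi.mp hs)
  have t2 : Filter.Tendsto (fun s => (f (2 * s) - f s) / s) (nhdsWithin 0 (Set.Ioi 0))
      (nhds L0) := by
    have a1 : Filter.Tendsto (fun s => (f (2 * s) - f 0) / (2 * s)) (nhdsWithin 0 (Set.Ioi 0))
        (nhds L0) := t1.comp tdouble
    have a2 : Filter.Tendsto (fun s => 2 * ((f (2 * s) - f 0) / (2 * s)) - (f s - f 0) / s)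
        (nhdsWithin 0 (Set.Ioi 0)) (nhds (2 * L0 - L0)) := (a1.const_mul 2).sub t1
    have a3 : (2 * L0 - L0) = L0 := by ring
    rw [a3] at a2
    refine a2.congr' ?_
    filter_upwards [self_mem_nhdsWithin] with s hs
    have hs0 : (0:ℝ) < s := hs
    field_simp
    ring
  have t3 : Filter.Tendsto (fun s : ℝ => V yhat (yhat + s • v)) (nhdsWithin 0 (Set.Ioi 0))
      (nhds 0) := by
    have eV3 : ∀ s : ℝ, V yhat (yhat + s • v) = f s - f 0 - s * L0 := by
      intro s
      rw [hV, show yhat + s • v - yhat = s • v by module, real_inner_smul_right, hL0]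
      simp [hf]
    have hfc : Filter.Tendsto f (nhds 0) (nhds (f 0)) := hfd.continuousAt.tendsto
    have : Filter.Tendsto (fun s : ℝ => f s - f 0 - s * L0) (nhds 0)
        (nhds (f 0 - f 0 - 0 * L0)) :=
      (hfc.sub tendsto_const_nhds).sub ((continuous_id.mul continuous_const).tendsto 0)
    have h0 : (f 0 - f 0 - 0 * L0 : ℝ) = 0 := by ring
    rw [h0] at this
    exact Filter.Tendsto.congr (fun s : ℝ => (eV3 s).symm) (this.mono_left nhdsWithin_le_nhds)
  -- combine to get the limit of A
  have claim2 : Filter.Tendsto A (nhdsWithin 0 (Set.Ioi 0))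
      (nhds ((inner ℝ π v : ℝ) + (g y - g yhat)
        - μ * (V yhat y - 0 - (1 - 0) * (L0 - L0))
        + τ * (L0 - (inner ℝ (ω' ybar) v : ℝ)))) := by
    rw [hA]
    have tone : Filter.Tendsto (fun s : ℝ => 1 - s) (nhdsWithin 0 (Set.Ioi 0))
        (nhds (1 - 0)) :=
      ((continuous_const.sub continuous_id).tendsto 0).mono_left nhdsWithin_le_nhds
    have tq : Filter.Tendsto
        (fun s : ℝ => (ω (yhat + (2 * s) • v) - ω (yhat + s • v)) / s - L0)
        (nhdsWithin 0 (Set.Ioi 0)) (nhds (L0 - L0)) := t2.sub tendsto_const_nhds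
    have tB : Filter.Tendsto
        (fun s : ℝ => V yhat y - V yhat (yhat + s • v)
          - (1 - s) * ((ω (yhat + (2 * s) • v) - ω (yhat + s • v)) / s - L0))
        (nhdsWithin 0 (Set.Ioi 0)) (nhds (V yhat y - 0 - (1 - 0) * (L0 - L0))) :=
      (((tendsto_const_nhds (x := V yhat y)).sub t3).sub (tone.mul tq))
    have tD : Filter.Tendsto
        (fun s : ℝ => (ω (yhat + s • v) - ω yhat) / s - (inner ℝ (ω' ybar) v : ℝ))
        (nhdsWithin 0 (Set.Ioi 0)) (nhds (L0 - (inner ℝ (ω' ybar) v : ℝ))) := by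
      have hf0 : f 0 = ω yhat := by rw [hf]; simp
      have := t1.sub (tendsto_const_nhds (x := (inner ℝ (ω' ybar) v : ℝ)))
      rw [hf0] at this
      exact this
    exact ((tendsto_const_nhds.sub (tB.const_mul μ)).add (tD.const_mul τ))
  -- conclude 0 ≤ F
  have hF : 0 ≤ (inner ℝ π v : ℝ) + (g y - g yhat)
      - μ * (V yhat y - 0 - (1 - 0) * (L0 - L0))
      + τ * (L0 - (inner ℝ (ω' ybar) v : ℝ)) := by
    refine ge_of_tendsto claim2 ?_
    filter_upwards [Ioc_mem_nhdsGT_of_mem (Set.left_mem_Ico.mpr zero_lt_one)] with s hs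
    exact claim1 s hs
  -- three-point identity and final algebra
  have hid : V ybar y - V ybar yhat - V yhat y = L0 - (inner ℝ (ω' ybar) v : ℝ) := by
    rw [hV, hV, hV, show y - ybar = (yhat - ybar) + v by rw [hv]; module,
      inner_add_right, show y - yhat = v by rw [hv], hL0]
    ring
  have hπ : (inner ℝ (yhat - y) π : ℝ) = - (inner ℝ π v : ℝ) := by
    rw [real_inner_comm, show yhat - y = -v by rw [hv]; module, inner_neg_right]
  have hidτ : τ * V ybar y - τ * V ybar yhat - τ * V yhat y
      = τ * (L0 - (inner ℝ (ω' ybar) v : ℝ)) := by linear_combination τ * hid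
  rw [hπ]
  nlinarith [hF, hidτ]
end

section
/- Weighted aggregation of Bregman distances under smoothness: let g : ℝⁿ → ℝᵐ be a vector function whose components are convex with g L_g-Lipschitz-smooth in the operator-norm sense (‖g'(y) − g'(ȳ)‖ ≤ L_g‖y − ȳ‖), let g* and D_{g*} denote the componentwise conjugate and componentwise conjugate Bregman distance. Then for any nonnegative weight vector w ∈ ℝ₊ᵐ and any π̄ = g'(ȳ), π = g'(y): ‖w‖ · wᵀ D_{g*}(π̄, π) ≥ ‖wᵀ(π̄ − π)‖² / (2 L_g). -/
open Finset

local notation "⟪" x ", " y "⟫" => @inner ℝ _ _ x y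

lemma subgrad_aux {E : Type*} [NormedAddCommGroup E] [InnerProductSpace ℝ E] [CompleteSpace E]
    {f : E → ℝ} {G : E} {y : E}
    (hc : ConvexOn ℝ Set.univ f) (h : HasGradientAt f G y) (x : E) :
    f y + ⟪G, x - y⟫ ≤ f x := by
  set φ : ℝ → ℝ := fun t => f (t • (x - y) + y) with hφ
  have hline : HasDerivAt (fun t : ℝ => t • (x - y) + y) (x - y) 0 := by
    simpa using ((hasDerivAt_id (0:ℝ)).smul_const (x - y)).add_const y
  have hF : HasFDerivAt f (InnerProductSpace.toDual ℝ E G : E →L[ℝ] ℝ) ((0:ℝ) • (x - y) + y) := by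
    simpa using h.hasFDerivAt
  have hd : HasDerivAt φ ⟪G, x - y⟫ 0 := by
    have := hF.comp_hasDerivAt 0 hline
    simp at this
    exact this
  have hcφ : ConvexOn ℝ Set.univ φ := by
    have h := hc.comp_affineMap (AffineMap.lineMap y x : ℝ →ᵃ[ℝ] E)
    simp only [Set.preimage_univ] at h
    have heq : φ = f ∘ (AffineMap.lineMap y x : ℝ →ᵃ[ℝ] E) := by
      funext t; simp [hφ, AffineMap.lineMap_apply]
    rwa [heq]
  have hs := hcφ.le_slope_of_hasDerivAt (Set.mem_univ (0:ℝ)) (Set.mem_univ (1:ℝ))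
    (by norm_num) hd
  have h0 : φ 0 = f y := by simp [hφ]
  have h1 : φ 1 = f x := by simp [hφ]
  rw [slope_def_field] at hs
  simp [h0, h1] at hs
  linarith

lemma descent_aux {E : Type*} [NormedAddCommGroup E] [InnerProductSpace ℝ E] [CompleteSpace E]
    {f : E → ℝ} {F : E → E} {L : ℝ}
    (hF : ∀ x, HasGradientAt f (F x) x)
    (hlip : ∀ a b, ‖F a - F b‖ ≤ L * ‖a - b‖) (z x : E) :
    f x ≤ f z + ⟪F z, x - z⟫ + L / 2 * ‖x - z‖ ^ 2 := by
  set d : E := x - z with hd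
  set ψ : ℝ → ℝ := fun t => f (z + t • d) - t * ⟪F z, d⟫ - L / 2 * ‖d‖ ^ 2 * t ^ 2 with hψ
  have hψd : ∀ t : ℝ, HasDerivAt ψ
      (⟪F (z + t • d), d⟫ - ⟪F z, d⟫ - L * ‖d‖ ^ 2 * t) t := by
    intro t
    have hline : HasDerivAt (fun t : ℝ => z + t • d) d t := by
      simpa using (((hasDerivAt_id t).smul_const d).const_add z)
    have h1 : HasDerivAt (fun t : ℝ => f (z + t • d)) ⟪F (z + t • d), d⟫ t := by
      have := (hF (z + t • d)).hasFDerivAt.comp_hasDerivAt t hline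
      simp at this
      exact this
    have h2 : HasDerivAt (fun t : ℝ => t * ⟪F z, d⟫) ⟪F z, d⟫ t := by
      simpa using (hasDerivAt_mul_const (⟪F z, d⟫ : ℝ) (x := t))
    have h3 : HasDerivAt (fun t : ℝ => L / 2 * ‖d‖ ^ 2 * t ^ 2)
        (L / 2 * ‖d‖ ^ 2 * (2 * t)) t := by
      simpa using ((hasDerivAt_pow 2 t).const_mul (L / 2 * ‖d‖ ^ 2))
    have := (h1.sub h2).sub h3
    exact this.congr_deriv (by ring)
  have hmono : AntitoneOn ψ (Set.Icc (0:ℝ) 1) := by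
    apply antitoneOn_of_deriv_nonpos (convex_Icc (0:ℝ) 1)
    · exact (Differentiable.continuous (fun t => (hψd t).differentiableAt)).continuousOn
    · exact fun t _ => ((hψd t).differentiableAt).differentiableWithinAt
    · intro t ht
      rw [interior_Icc] at ht
      rw [(hψd t).deriv]
      have h1 : (⟪F (z + t • d) - F z, d⟫ : ℝ) ≤ ‖F (z + t • d) - F z‖ * ‖d‖ :=
        real_inner_le_norm _ _
      have h2 : ‖F (z + t • d) - F z‖ ≤ L * (t * ‖d‖) := by
        have := hlip (z + t • d) z
        simpa [norm_smul, abs_of_nonneg ht.1.le] using this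
      have h3 : ‖F (z + t • d) - F z‖ * ‖d‖ ≤ L * (t * ‖d‖) * ‖d‖ :=
        mul_le_mul_of_nonneg_right h2 (norm_nonneg _)
      have h4 : (⟪F (z + t • d), d⟫ : ℝ) - ⟪F z, d⟫ = ⟪F (z + t • d) - F z, d⟫ := by
        rw [inner_sub_left]
      nlinarith [norm_nonneg d]
  have key := hmono (Set.mem_Icc.2 ⟨le_refl 0, zero_le_one⟩)
    (Set.mem_Icc.2 ⟨zero_le_one, le_refl 1⟩) zero_le_one
  have h0 : ψ 0 = f z := by simp [hψ]
  have h1 : ψ 1 = f x - ⟪F z, d⟫ - L / 2 * ‖d‖ ^ 2 := by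
    simp [hψ, hd]
  rw [h0, h1] at key
  linarith

/-- Weighted aggregation of Bregman distances under smoothness: if `g : ℝⁿ → ℝᵐ` has
convex components and is `L_g`-Lipschitz-smooth in the operator-norm sense, then for any
nonnegative weight vector `w` and associated dual points `π̄ = g'(ȳ)`, `π = g'(y)`,
`‖w‖ · wᵀ D_{g*}(π̄, π) ≥ ‖wᵀ(π̄ − π)‖² / (2 L_g)`. -/
theorem stmt_6 {n m : ℕ}
    (g : EuclideanSpace ℝ (Fin n) → Fin m → ℝ)
    -- the rows of the Jacobian g'(y)
    (J : EuclideanSpace ℝ (Fin n) → Fin m → EuclideanSpace ℝ (Fin n))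
    (Lg : ℝ) (hLg : 0 < Lg)
    (hconv : ∀ j, ConvexOn ℝ Set.univ (fun y => g y j))
    (hgrad : ∀ y j, HasGradientAt (fun x => g x j) (J y j) y)
    -- ℓ₂ operator-norm smoothness: ‖g'(y) − g'(ȳ)‖ ≤ L_g ‖y − ȳ‖
    (hsm : ∀ y ybar (v : Fin m → ℝ), (∑ j, (v j)^2) ≤ 1 →
      ‖∑ j, v j • (J y j - J ybar j)‖ ≤ Lg * ‖y - ybar‖)
    -- componentwise conjugates, pinned down via Fenchel–Young at gradient points
    (gstar : Fin m → EuclideanSpace ℝ (Fin n) → ℝ)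
    (hFY : ∀ j y, gstar j (J y j) = (inner ℝ (J y j) y : ℝ) - g y j)
    (w : Fin m → ℝ) (hw : ∀ j, 0 ≤ w j)
    (y ybar : EuclideanSpace ℝ (Fin n)) :
    Real.sqrt (∑ j, (w j)^2) *
        (∑ j, w j *
          (gstar j (J y j) - gstar j (J ybar j) - (inner ℝ ybar (J y j - J ybar j) : ℝ)))
      ≥ ‖∑ j, w j • (J ybar j - J y j)‖^2 / (2 * Lg) := by
  classical
  set W : ℝ := Real.sqrt (∑ j, (w j)^2) with hW
  have hWnn : 0 ≤ W := Real.sqrt_nonneg _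
  set f : EuclideanSpace ℝ (Fin n) → ℝ := fun u => ∑ j, w j * g u j with hf
  set F : EuclideanSpace ℝ (Fin n) → EuclideanSpace ℝ (Fin n) :=
    fun u => ∑ j, w j • J u j with hFdef
  have hdiff : (∑ j, w j • (J ybar j - J y j)) = F ybar - F y := by
    simp only [hFdef, smul_sub]
    rw [Finset.sum_sub_distrib]
  rw [hdiff]
  rcases eq_or_lt_of_le hWnn with hW0 | hWpos
  · -- degenerate case: all weights vanish
    have hsq : (∑ j, (w j)^2) = 0 := by
      have := Real.sqrt_eq_zero (Finset.sum_nonneg fun j _ => sq_nonneg (w j)) |>.mp hW0.symm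
      exact this
    have hwz : ∀ j, w j = 0 := by
      intro j
      have := (Finset.sum_eq_zero_iff_of_nonneg (fun j _ => sq_nonneg (w j))).mp hsq j
        (Finset.mem_univ j)
      exact pow_eq_zero_iff (n := 2) (by norm_num) |>.mp this
    have hF0 : F ybar - F y = 0 := by
      simp [hFdef, hwz]
    rw [hF0, ← hW0]
    simp
  -- main case
  have hWsq : W ^ 2 = ∑ j, (w j)^2 :=
    Real.sq_sqrt (Finset.sum_nonneg fun j _ => sq_nonneg (w j))
  -- gradient of the aggregated function
  have hFf : ∀ x, HasGradientAt f (F x) x := by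
    intro x
    have h1 : HasFDerivAt f
        (∑ j, w j • (InnerProductSpace.toDual ℝ (EuclideanSpace ℝ (Fin n)) (J x j) :
          EuclideanSpace ℝ (Fin n) →L[ℝ] ℝ)) x :=
      HasFDerivAt.fun_sum fun j _ => ((hgrad x j).hasFDerivAt).const_mul (w j)
    rw [hasGradientAt_iff_hasFDerivAt]
    refine h1.congr_fderiv ?_
    rw [hFdef]
    ext v
    simp [sum_inner, real_inner_smul_left]
  -- Lipschitz continuity of the aggregated gradient
  have hlip : ∀ a b, ‖F a - F b‖ ≤ (W * Lg) * ‖a - b‖ := by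
    intro a b
    have hone : (∑ j, (w j / W)^2) ≤ 1 := by
      have : (∑ j, (w j / W)^2) = (∑ j, (w j)^2) / W ^ 2 := by
        rw [Finset.sum_div]
        exact Finset.sum_congr rfl fun j _ => by rw [div_pow]
      rw [this, ← hWsq, div_self (by positivity)]
    have h := hsm a b (fun j => w j / W) hone
    beta_reduce at h
    have heq : (∑ j, (w j / W) • (J a j - J b j)) = (1 / W) • (F a - F b) := by
      rw [hFdef, smul_sub, Finset.smul_sum, Finset.smul_sum, ← Finset.sum_sub_distrib]
      refine Finset.sum_congr rfl fun j _ => ?_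
      rw [← smul_sub, ← smul_sub, smul_smul]
      congr 1
      ring
    rw [heq] at h
    rw [norm_smul] at h
    have habs : |1 / W| = 1 / W := abs_of_pos (by positivity)
    rw [Real.norm_eq_abs, habs] at h
    have := mul_le_mul_of_nonneg_left h hWnn
    calc ‖F a - F b‖ = W * (1 / W * ‖F a - F b‖) := by field_simp
    _ ≤ W * (Lg * ‖a - b‖) := this
    _ = (W * Lg) * ‖a - b‖ := by ring
  set L : ℝ := W * Lg with hL
  have hLpos : 0 < L := mul_pos hWpos hLg
  set d : EuclideanSpace ℝ (Fin n) := F ybar - F y with hdd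
  -- aggregated subgradient inequality at y
  have hsubf : ∀ x, f y + ⟪F y, x - y⟫ ≤ f x := by
    intro x
    have hterm : ∀ j, w j * (g y j + ⟪J y j, x - y⟫) ≤ w j * g x j := fun j =>
      mul_le_mul_of_nonneg_left (subgrad_aux (hconv j) (hgrad y j) x) (hw j)
    have hsum : (∑ j, w j * (g y j + ⟪J y j, x - y⟫)) ≤ ∑ j, w j * g x j :=
      Finset.sum_le_sum (fun j _ => hterm j)
    have hinner : (⟪F y, x - y⟫ : ℝ) = ∑ j, w j * ⟪J y j, x - y⟫ := by
      rw [hFdef, sum_inner]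
      exact Finset.sum_congr rfl fun j _ => real_inner_smul_left _ _ _
    calc f y + ⟪F y, x - y⟫ = ∑ j, w j * (g y j + ⟪J y j, x - y⟫) := by
          rw [hf, hinner, ← Finset.sum_add_distrib]
          exact Finset.sum_congr rfl fun j _ => by ring
    _ ≤ ∑ j, w j * g x j := hsum
    _ = f x := rfl
  -- the key one-point estimate
  set xpt : EuclideanSpace ℝ (Fin n) := ybar - (1 / L) • d with hxpt
  have hA := hsubf xpt
  have hB := descent_aux hFf hlip ybar xpt
  have e1 : xpt - ybar = -((1 / L) • d) := by rw [hxpt]; abel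
  have e2 : xpt - y = (ybar - y) - (1 / L) • d := by rw [hxpt]; abel
  have e3 : ‖xpt - ybar‖ ^ 2 = (1 / L) ^ 2 * ‖d‖ ^ 2 := by
    rw [e1, norm_neg, norm_smul, mul_pow, Real.norm_eq_abs,
      abs_of_pos (by positivity : (0:ℝ) < 1 / L)]
  have e4 : (⟪F ybar, xpt - ybar⟫ : ℝ) = -(1 / L * ⟪F ybar, d⟫) := by
    rw [e1, inner_neg_right, real_inner_smul_right]
  have e5 : (⟪F y, xpt - y⟫ : ℝ) = ⟪F y, ybar - y⟫ - 1 / L * ⟪F y, d⟫ := by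
    rw [e2, inner_sub_right, real_inner_smul_right]
  have e6 : (⟪F ybar, d⟫ : ℝ) - ⟪F y, d⟫ = ‖d‖ ^ 2 := by
    rw [← inner_sub_left, ← hdd, real_inner_self_eq_norm_sq]
  have hkey : f ybar - f y - ⟪F y, ybar - y⟫ ≥ ‖d‖ ^ 2 / (2 * L) := by
    rw [e4, e3] at hB
    rw [e5] at hA
    have : f y + (⟪F y, ybar - y⟫ - 1 / L * ⟪F y, d⟫)
        ≤ f ybar + -(1 / L * ⟪F ybar, d⟫) + L / 2 * ((1 / L) ^ 2 * ‖d‖ ^ 2) :=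
      le_trans hA hB
    have hL' : L ≠ 0 := ne_of_gt hLpos
    have hd2 : 1 / L * ⟪F ybar, d⟫ - 1 / L * ⟪F y, d⟫ = ‖d‖ ^ 2 / L := by
      rw [← mul_sub, e6]; ring
    have hsq : L / 2 * ((1 / L) ^ 2 * ‖d‖ ^ 2) = ‖d‖ ^ 2 / (2 * L) := by
      field_simp
    rw [hsq] at this
    have : ‖d‖ ^ 2 / L - ‖d‖ ^ 2 / (2 * L) ≤ f ybar - f y - ⟪F y, ybar - y⟫ := by
      linarith [hd2, this]
    have hhalf : ‖d‖ ^ 2 / L - ‖d‖ ^ 2 / (2 * L) = ‖d‖ ^ 2 / (2 * L) := by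
      field_simp; ring
    linarith [hhalf ▸ this]
  -- identify the Bregman sum
  have hSeq : (∑ j, w j *
      (gstar j (J y j) - gstar j (J ybar j) - (inner ℝ ybar (J y j - J ybar j) : ℝ)))
      = f ybar - f y - ⟪F y, ybar - y⟫ := by
    have hterm : ∀ j, w j *
        (gstar j (J y j) - gstar j (J ybar j) - (inner ℝ ybar (J y j - J ybar j) : ℝ))
        = w j * g ybar j - w j * g y j - w j * ⟪J y j, ybar - y⟫ := by
      intro j
      rw [hFY j y, hFY j ybar]
      have i1 : (⟪ybar, J y j - J ybar j⟫ : ℝ) = ⟪ybar, J y j⟫ - ⟪ybar, J ybar j⟫ :=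
        inner_sub_right _ _ _
      have i2 : (⟪J y j, ybar - y⟫ : ℝ) = ⟪J y j, ybar⟫ - ⟪J y j, y⟫ :=
        inner_sub_right _ _ _
      have i3 : (⟪ybar, J y j⟫ : ℝ) = ⟪J y j, ybar⟫ := real_inner_comm _ _
      have i4 : (⟪J ybar j, ybar⟫ : ℝ) = ⟪ybar, J ybar j⟫ := real_inner_comm _ _
      rw [i1, i2, i3, i4]
      ring
    rw [Finset.sum_congr rfl fun j _ => hterm j]
    have hinner : (⟪F y, ybar - y⟫ : ℝ) = ∑ j, w j * ⟪J y j, ybar - y⟫ := by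
      rw [hFdef, sum_inner]
      exact Finset.sum_congr rfl fun j _ => real_inner_smul_left _ _ _
    rw [Finset.sum_sub_distrib, Finset.sum_sub_distrib, hf, hinner]
  rw [hSeq]
  -- conclude
  have : W * (f ybar - f y - ⟪F y, ybar - y⟫) ≥ W * (‖d‖ ^ 2 / (2 * L)) :=
    mul_le_mul_of_nonneg_left hkey hWnn
  have heq : W * (‖d‖ ^ 2 / (2 * L)) = ‖d‖ ^ 2 / (2 * Lg) := by
    rw [hL]
    field_simp
  linarith [heq ▸ this]
end

section
/- Martingale noise bound: let (δᵗ)_{t=0}^{N−1} be a martingale-difference sequence with E[δᵗ | ℱₜ] = 0 and E[‖δᵗ‖² | ℱₜ] ≤ σ² for all t, and let π̂ be a random vector in a bounded set Π with M_Π = max_{π∈Π}‖π‖ (π̂ may be correlated with the δᵗ). Then E[Σ_{t=0}^{N−1} ⟨π̂, δᵗ⟩] ≤ √N · M_Π · σ. -/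
open MeasureTheory Finset

section Aux

variable {Ω : Type*} {m0 : MeasurableSpace Ω} {μ : Measure Ω} {n : ℕ}

lemma aux_coord_le_norm (x : EuclideanSpace ℝ (Fin n)) (i : Fin n) : |x i| ≤ ‖x‖ := by
  rw [EuclideanSpace.norm_eq]
  have h : ‖x i‖ ^ 2 ≤ ∑ j, ‖x j‖ ^ 2 :=
    Finset.single_le_sum (f := fun j => ‖x j‖ ^ 2) (fun j _ => sq_nonneg _) (Finset.mem_univ i)
  calc |x i| = Real.sqrt (‖x i‖ ^ 2) := by
        rw [Real.sqrt_sq_eq_abs, abs_norm, Real.norm_eq_abs]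
    _ ≤ Real.sqrt (∑ j, ‖x j‖ ^ 2) := Real.sqrt_le_sqrt h

/-- Integrability of the inner product of two L² functions. -/
lemma aux_integrable_inner {f g : Ω → EuclideanSpace ℝ (Fin n)}
    (hfm : AEStronglyMeasurable f μ) (hgm : AEStronglyMeasurable g μ)
    (hf : Integrable (fun ω => ‖f ω‖ ^ 2) μ) (hg : Integrable (fun ω => ‖g ω‖ ^ 2) μ) :
    Integrable (fun ω => (inner ℝ (f ω) (g ω) : ℝ)) μ := by
  refine Integrable.mono' (((hf.add hg).div_const 2)) (hfm.inner hgm) ?_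
  filter_upwards with ω
  simp only [Pi.add_apply]
  have h1 : ‖(inner ℝ (f ω) (g ω) : ℝ)‖ ≤ ‖f ω‖ * ‖g ω‖ := norm_inner_le_norm _ _
  nlinarith [sq_nonneg (‖f ω‖ - ‖g ω‖), norm_nonneg (f ω), norm_nonneg (g ω)]

/-- Integrability of a product of coordinates of two L² functions. -/
lemma aux_integrable_coord_mul {f g : Ω → EuclideanSpace ℝ (Fin n)}
    (hfm : AEStronglyMeasurable f μ) (hgm : AEStronglyMeasurable g μ)
    (hf : Integrable (fun ω => ‖f ω‖ ^ 2) μ) (hg : Integrable (fun ω => ‖g ω‖ ^ 2) μ)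
    (i : Fin n) :
    Integrable (fun ω => f ω i * g ω i) μ := by
  have hfmi : AEStronglyMeasurable (fun ω => f ω i) μ :=
    ((EuclideanSpace.proj (𝕜 := ℝ) i).continuous.comp_aestronglyMeasurable hfm :)
  have hgmi : AEStronglyMeasurable (fun ω => g ω i) μ :=
    ((EuclideanSpace.proj (𝕜 := ℝ) i).continuous.comp_aestronglyMeasurable hgm :)
  refine Integrable.mono' (((hf.add hg).div_const 2)) (hfmi.mul hgmi) ?_
  filter_upwards with ω
  simp only [Pi.add_apply]
  have h1 : |f ω i| ≤ ‖f ω‖ := aux_coord_le_norm _ i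
  have h2 : |g ω i| ≤ ‖g ω‖ := aux_coord_le_norm _ i
  have h3 : ‖f ω i * g ω i‖ ≤ |f ω i| * |g ω i| := by
    rw [Real.norm_eq_abs, abs_mul]
  nlinarith [abs_nonneg (f ω i), abs_nonneg (g ω i), norm_nonneg (f ω), norm_nonneg (g ω),
    sq_nonneg (‖f ω‖ - ‖g ω‖)]

end Aux

/-- Martingale noise bound: if `(δᵗ)` is a martingale-difference sequence with
`E[δᵗ | ℱₜ] = 0` and `E[‖δᵗ‖² | ℱₜ] ≤ σ²`, and `π̂` is a random vector taking values
in a bounded set `Π` with `‖π‖ ≤ M_Π` on `Π` (possibly correlated with the `δᵗ`), then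
`E[Σ_{t<N} ⟨π̂, δᵗ⟩] ≤ √N · M_Π · σ`. -/
theorem stmt_8 {Ω : Type*} {m0 : MeasurableSpace Ω} (μ : Measure Ω)
    [IsProbabilityMeasure μ]
    {n : ℕ} (N : ℕ) (ℱ : Filtration ℕ m0)
    (δ : ℕ → Ω → EuclideanSpace ℝ (Fin n))
    (hadapt : ∀ t, StronglyMeasurable[ℱ (t + 1)] (δ t))
    (σ M : ℝ) (hσ : 0 ≤ σ) (hM : 0 ≤ M)
    -- E[δᵗ | ℱₜ] = 0
    (hmean : ∀ t, μ[δ t | ℱ t] =ᵐ[μ] 0)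
    -- E[‖δᵗ‖² | ℱₜ] ≤ σ²
    (hvar : ∀ t, ∀ᵐ ω ∂μ, (μ[fun ω' => ‖δ t ω'‖ ^ 2 | ℱ t]) ω ≤ σ ^ 2)
    (hsq : ∀ t, Integrable (fun ω => ‖δ t ω‖ ^ 2) μ)
    (P : Set (EuclideanSpace ℝ (Fin n))) (hP : IsCompact P)
    (hPbdd : ∀ p ∈ P, ‖p‖ ≤ M)
    (πhat : Ω → EuclideanSpace ℝ (Fin n))
    (hπmeas : AEStronglyMeasurable πhat μ)
    (hπmem : ∀ ω, πhat ω ∈ P)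
    (hint : ∀ t, Integrable (fun ω => (inner ℝ (πhat ω) (δ t ω) : ℝ)) μ) :
    ∫ ω, (∑ t ∈ Finset.range N, (inner ℝ (πhat ω) (δ t ω) : ℝ)) ∂μ ≤
      Real.sqrt N * M * σ := by
  classical
  -- basic measurability / integrability facts
  have hδm : ∀ t, AEStronglyMeasurable (δ t) μ := fun t =>
    ((hadapt t).mono (ℱ.le (t + 1))).aestronglyMeasurable
  have hmem2 : ∀ t, MemLp (δ t) 2 μ := fun t =>
    (memLp_two_iff_integrable_sq_norm (hδm t)).2 (hsq t)
  have hδint : ∀ t, Integrable (δ t) μ := fun t => (hmem2 t).integrable one_le_two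
  have hcint : ∀ t (i : Fin n), Integrable (fun ω => δ t ω i) μ := fun t i =>
    ((EuclideanSpace.proj (𝕜 := ℝ) i).comp_memLp' (hmem2 t)).integrable one_le_two
  have hcsm : ∀ t (i : Fin n), StronglyMeasurable[ℱ (t + 1)] (fun ω => δ t ω i) := fun t i =>
    (EuclideanSpace.proj (𝕜 := ℝ) i).continuous.comp_stronglyMeasurable (hadapt t)
  -- coordinate conditional means are zero
  have hcmean : ∀ t (i : Fin n), μ[fun ω => δ t ω i | ℱ t] =ᵐ[μ] 0 := by
    intro t i
    refine (ae_eq_condExp_of_forall_setIntegral_eq (ℱ.le t) (hcint t i)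
      (fun s _ _ => (integrable_zero _ _ _).integrableOn) (fun s hs hμs => ?_)
      stronglyMeasurable_zero.aestronglyMeasurable).symm
    simp only [Pi.zero_apply, integral_zero]
    have h1 : (EuclideanSpace.proj (𝕜 := ℝ) i) (∫ ω in s, δ t ω ∂μ) = ∫ ω in s, δ t ω i ∂μ := by
      simpa using ((EuclideanSpace.proj (𝕜 := ℝ) i).integral_comp_comm (hδint t).integrableOn).symm
    have h2 : ∫ ω in s, δ t ω ∂μ = 0 := by
      rw [← setIntegral_condExp (ℱ.le t) (hδint t) hs]
      calc ∫ ω in s, (μ[δ t | ℱ t]) ω ∂μ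
          = ∫ ω in s, (0 : EuclideanSpace ℝ (Fin n)) ∂μ :=
            integral_congr_ae (ae_restrict_of_ae (hmean t))
        _ = 0 := by simp
    rw [← h1, h2]
    simp
  -- orthogonality of distinct increments
  have horth : ∀ s t, s < t → ∫ ω, (inner ℝ (δ s ω) (δ t ω) : ℝ) ∂μ = 0 := by
    intro s t hst
    have hcoord : ∀ i : Fin n, ∫ ω, δ s ω i * δ t ω i ∂μ = 0 := by
      intro i
      have hfm : StronglyMeasurable[ℱ t] (fun ω => δ s ω i) :=
        (hcsm s i).mono (ℱ.mono hst)
      have hfg : Integrable ((fun ω => δ s ω i) * fun ω => δ t ω i) μ :=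
        aux_integrable_coord_mul (hδm s) (hδm t) (hsq s) (hsq t) i
      have hmul := condExp_mul_of_stronglyMeasurable_left hfm hfg (hcint t i)
      calc ∫ ω, δ s ω i * δ t ω i ∂μ
          = ∫ ω, (μ[(fun ω => δ s ω i) * fun ω => δ t ω i | ℱ t]) ω ∂μ :=
            (integral_condExp (ℱ.le t)).symm
        _ = ∫ ω, (0 : ℝ) ∂μ := by
            refine integral_congr_ae ?_
            filter_upwards [hmul, hcmean t i] with ω h1 h2
            simp only [Pi.mul_apply] at h1 ⊢
            rw [h1, h2]; simp
        _ = 0 := by simp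
    have hrw : ∀ ω, (inner ℝ (δ s ω) (δ t ω) : ℝ) = ∑ i, δ s ω i * δ t ω i := by
      intro ω
      simp [PiLp.inner_apply, RCLike.inner_apply, mul_comm]
    calc ∫ ω, (inner ℝ (δ s ω) (δ t ω) : ℝ) ∂μ
        = ∫ ω, ∑ i, δ s ω i * δ t ω i ∂μ := by simp_rw [hrw]
      _ = ∑ i, ∫ ω, δ s ω i * δ t ω i ∂μ :=
          integral_finset_sum _ (fun i _ =>
            aux_integrable_coord_mul (hδm s) (hδm t) (hsq s) (hsq t) i)
      _ = 0 := by simp [hcoord]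
  have horth' : ∀ s ∈ Finset.range N, ∀ t ∈ Finset.range N, s ≠ t →
      ∫ ω, (inner ℝ (δ s ω) (δ t ω) : ℝ) ∂μ = 0 := by
    intro s _ t _ hst
    rcases hst.lt_or_gt with h | h
    · exact horth s t h
    · have h0 := horth t s h
      calc ∫ ω, (inner ℝ (δ s ω) (δ t ω) : ℝ) ∂μ
          = ∫ ω, (inner ℝ (δ t ω) (δ s ω) : ℝ) ∂μ := by
            congr 1; ext ω; exact real_inner_comm _ _
        _ = 0 := h0
  -- second moment bound for each increment
  have hm2 : ∀ t, ∫ ω, ‖δ t ω‖ ^ 2 ∂μ ≤ σ ^ 2 := by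
    intro t
    rw [← integral_condExp (ℱ.le t) (f := fun ω => ‖δ t ω‖ ^ 2)]
    calc ∫ ω, (μ[fun ω' => ‖δ t ω'‖ ^ 2 | ℱ t]) ω ∂μ
        ≤ ∫ _, σ ^ 2 ∂μ := integral_mono_ae integrable_condExp (integrable_const _) (hvar t)
      _ = σ ^ 2 := by simp
  -- the sum S and its properties
  set S : Ω → EuclideanSpace ℝ (Fin n) := fun ω => ∑ t ∈ Finset.range N, δ t ω with hS
  have hSm : AEStronglyMeasurable S μ := by
    apply Finset.aestronglyMeasurable_fun_sum
    exact fun t _ => hδm t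
  have hSmem2 : MemLp S 2 μ := by
    have heq : (∑ t ∈ Finset.range N, δ t) = S := by
      funext ω; simp [hS, Finset.sum_apply]
    exact heq ▸ memLp_finset_sum' _ (fun t _ => hmem2 t)
  have hSsq : Integrable (fun ω => ‖S ω‖ ^ 2) μ :=
    (memLp_two_iff_integrable_sq_norm hSm).1 hSmem2
  have hSnorm : Integrable (fun ω => ‖S ω‖) μ := (hSmem2.integrable one_le_two).norm
  -- E‖S‖² ≤ N σ²
  have hSvar : ∫ ω, ‖S ω‖ ^ 2 ∂μ ≤ N * σ ^ 2 := by
    have hexp : ∀ ω, ‖S ω‖ ^ 2 =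
        ∑ s ∈ Finset.range N, ∑ t ∈ Finset.range N, (inner ℝ (δ s ω) (δ t ω) : ℝ) := by
      intro ω
      rw [← real_inner_self_eq_norm_sq, hS]
      rw [sum_inner]
      exact Finset.sum_congr rfl fun s _ => inner_sum _ _ _
    calc ∫ ω, ‖S ω‖ ^ 2 ∂μ
        = ∑ s ∈ Finset.range N, ∑ t ∈ Finset.range N,
            ∫ ω, (inner ℝ (δ s ω) (δ t ω) : ℝ) ∂μ := by
          simp_rw [hexp]
          rw [integral_finset_sum _ (fun s _ => integrable_finset_sum _ (fun t _ =>
            aux_integrable_inner (hδm s) (hδm t) (hsq s) (hsq t)))]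
          exact Finset.sum_congr rfl fun s _ => integral_finset_sum _ (fun t _ =>
            aux_integrable_inner (hδm s) (hδm t) (hsq s) (hsq t))
      _ = ∑ s ∈ Finset.range N, ∫ ω, (inner ℝ (δ s ω) (δ s ω) : ℝ) ∂μ := by
          refine Finset.sum_congr rfl fun s hs => ?_
          exact Finset.sum_eq_single_of_mem s hs (fun t ht hts => horth' s hs t ht (Ne.symm hts))
      _ = ∑ s ∈ Finset.range N, ∫ ω, ‖δ s ω‖ ^ 2 ∂μ := by
          refine Finset.sum_congr rfl fun s _ => ?_
          congr 1
          ext ω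
          exact real_inner_self_eq_norm_sq _
      _ ≤ ∑ s ∈ Finset.range N, σ ^ 2 := Finset.sum_le_sum fun s _ => hm2 s
      _ = N * σ ^ 2 := by simp [mul_comm]
  -- E‖S‖ ≤ √(N σ²) = √N σ
  have hCS : ∫ ω, ‖S ω‖ ∂μ ≤ Real.sqrt N * σ := by
    have hpq : Real.HolderConjugate 2 2 := Real.HolderConjugate.two_two
    have h2 : (ENNReal.ofReal (2 : ℝ)) = 2 := by norm_num
    have hmem : MemLp (fun ω => ‖S ω‖) (ENNReal.ofReal (2 : ℝ)) μ := by
      rw [h2]; exact hSmem2.norm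
    have hone : MemLp (fun _ : Ω => (1 : ℝ)) (ENNReal.ofReal (2 : ℝ)) μ := by
      rw [h2]; exact memLp_const _
    have := integral_mul_le_Lp_mul_Lq_of_nonneg hpq
      (Filter.Eventually.of_forall fun ω => norm_nonneg (S ω))
      (Filter.Eventually.of_forall fun ω => zero_le_one) hmem hone
    simp only [mul_one, Real.one_rpow, integral_const, measure_univ, ENNReal.toReal_one, smul_eq_mul,
      one_mul] at this
    have hpow : ∀ ω, ‖S ω‖ ^ (2 : ℝ) = ‖S ω‖ ^ 2 := fun ω => by
      rw [show (2 : ℝ) = ((2 : ℕ) : ℝ) by norm_num, Real.rpow_natCast]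
    simp_rw [hpow] at this
    calc ∫ ω, ‖S ω‖ ∂μ ≤ (∫ ω, ‖S ω‖ ^ 2 ∂μ) ^ (1 / 2 : ℝ) := by
          simpa using this
      _ ≤ ((N : ℝ) * σ ^ 2) ^ (1 / 2 : ℝ) := by
          apply Real.rpow_le_rpow (integral_nonneg fun ω => sq_nonneg _) hSvar (by norm_num)
      _ = Real.sqrt ((N : ℝ) * σ ^ 2) := by
          rw [Real.sqrt_eq_rpow]
      _ = Real.sqrt N * σ := by
          rw [Real.sqrt_mul (Nat.cast_nonneg N), Real.sqrt_sq hσ]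
  -- put everything together
  have hbound : ∀ ω, (∑ t ∈ Finset.range N, (inner ℝ (πhat ω) (δ t ω) : ℝ)) ≤ M * ‖S ω‖ := by
    intro ω
    have h1 : (∑ t ∈ Finset.range N, (inner ℝ (πhat ω) (δ t ω) : ℝ)) = inner ℝ (πhat ω) (S ω) :=
      (inner_sum _ _ _).symm
    rw [h1]
    calc (inner ℝ (πhat ω) (S ω) : ℝ) ≤ ‖πhat ω‖ * ‖S ω‖ := real_inner_le_norm _ _
      _ ≤ M * ‖S ω‖ := by
          exact mul_le_mul_of_nonneg_right (hPbdd _ (hπmem ω)) (norm_nonneg _)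
  calc ∫ ω, (∑ t ∈ Finset.range N, (inner ℝ (πhat ω) (δ t ω) : ℝ)) ∂μ
      ≤ ∫ ω, M * ‖S ω‖ ∂μ := by
        refine integral_mono (integrable_finset_sum _ fun t _ => hint t)
          (hSnorm.const_mul M) ?_
        exact fun ω => hbound ω
    _ = M * ∫ ω, ‖S ω‖ ∂μ := integral_const_mul M _
    _ ≤ M * (Real.sqrt N * σ) := mul_le_mul_of_nonneg_left hCS hM
    _ = Real.sqrt N * M * σ := by ring
end

section
/- Strongly convex gap conversion with smooth outer layer: under the two-layer setup with f₁ being L_{f₁}-smooth and f₂ being M_{Π₂}-Lipschitz, if z̃ = (x*; π₁*, π̂₂) with π₁* ∈ ∂f₁(f₂(x*)) and π̂₂ ∈ ∂f₂(x̄ᴺ), Σᵗ wᵗ Q(z^{t+1}, z̃) ≤ B and (1/2)‖x̄ᴺ − x*‖² ≤ C, then f(x̄ᴺ) − f(x*) ≤ B/(Σᵗ wᵗ) + L_{f₁} M_{Π₂}² C. -/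
open Finset

set_option maxHeartbeats 1000000 in
/-- Strongly convex gap conversion with smooth outer layer: with `f₁` `L_{f₁}`-smooth and
`f₂` `M_{Π₂}`-Lipschitz, if `z̃ = (x*; π₁*, π̂₂)`, `Σᵗ wᵗ Q(z^{t+1}, z̃) ≤ B` and
`(1/2)‖x̄ᴺ − x*‖² ≤ C`, then `f(x̄ᴺ) − f(x*) ≤ B/(Σᵗ wᵗ) + L_{f₁} M_{Π₂}² C`. -/
theorem stmt_10 {n m N : ℕ} (hN : 0 < N)
    (f₁ : EuclideanSpace ℝ (Fin m) → ℝ)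
    (f₂ : EuclideanSpace ℝ (Fin n) → EuclideanSpace ℝ (Fin m))
    (u : EuclideanSpace ℝ (Fin n) → ℝ) (hu : ConvexOn ℝ Set.univ u)
    (f₁star : (Fin m → ℝ) → ℝ) (f₂star : (Fin m → Fin n → ℝ) → Fin m → ℝ)
    (x : ℕ → EuclideanSpace ℝ (Fin n))
    (π₁ : ℕ → Fin m → ℝ) (π₂ : ℕ → Fin m → Fin n → ℝ)
    (w : ℕ → ℝ) (hw : ∀ t, 0 < w t)
    (xstar xbar : EuclideanSpace ℝ (Fin n))
    (hxbar : xbar = (∑ t ∈ Finset.range N, w t)⁻¹ •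
      ∑ t ∈ Finset.range N, w t • x (t + 1))
    (π₁star : Fin m → ℝ) (π₂hat : Fin m → Fin n → ℝ)
    -- the two-layer nested Lagrangian L̃
    (L : (Fin m → ℝ) → (Fin m → Fin n → ℝ) → EuclideanSpace ℝ (Fin n) → ℝ)
    (hL : ∀ p₁ p₂ y, L p₁ p₂ y =
      (∑ j, p₁ j * ((∑ i, p₂ j i * y i) - f₂star p₂ j)) - f₁star p₁ + u y)
    (Lf₁ MP₂ : ℝ) (hLf₁ : 0 ≤ Lf₁) (hMP₂ : 0 ≤ MP₂)
    -- f₂ is M_{Π₂}-Lipschitz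
    (hLip₂ : ∀ x1 x2, ‖f₂ x1 - f₂ x2‖ ≤ MP₂ * ‖x1 - x2‖)
    -- Fenchel–Young equality for π̂₂ ∈ ∂f₂(x̄ᴺ)
    (hFY₂ : ∀ j, (∑ i, π₂hat j i * xbar i) - f₂star π₂hat j = f₂ xbar j)
    -- Fenchel–Young equality for π₁* ∈ ∂f₁(f₂(x*))
    (hFY₁ : f₁star π₁star = (∑ j, π₁star j * f₂ xstar j) - f₁ (f₂ xstar))
    -- L_{f₁}-smoothness: D_{f₁}(f₂(x*), b) ≤ (L_{f₁}/2)‖b − f₂(x*)‖²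
    (hsm : ∀ b : EuclideanSpace ℝ (Fin m),
      f₁ b - f₁ (f₂ xstar) - (∑ j, π₁star j * (b j - f₂ xstar j)) ≤
        Lf₁ / 2 * ‖b - f₂ xstar‖ ^ 2)
    -- weak duality at x*
    (hweak : ∀ t, f₁ (f₂ xstar) + u xstar ≥ L (π₁ (t + 1)) (π₂ (t + 1)) xstar)
    (B C : ℝ)
    (hB : ∑ t ∈ Finset.range N,
        w t * (L π₁star π₂hat (x (t + 1)) - L (π₁ (t + 1)) (π₂ (t + 1)) xstar) ≤ B)
    (hC : (1 / 2) * ‖xbar - xstar‖ ^ 2 ≤ C) :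
    (f₁ (f₂ xbar) + u xbar) - (f₁ (f₂ xstar) + u xstar) ≤
      B / (∑ t ∈ Finset.range N, w t) + Lf₁ * MP₂ ^ 2 * C := by
  set W := ∑ t ∈ Finset.range N, w t with hWdef
  have hWpos : 0 < W := Finset.sum_pos (fun t _ => hw t)
    (Finset.nonempty_range_iff.mpr hN.ne')
  -- the linear part of the Lagrangian in y
  have lm_add : ∀ y z : EuclideanSpace ℝ (Fin n),
      (∑ j, π₁star j * ∑ i, π₂hat j i * (y + z) i)
        = (∑ j, π₁star j * ∑ i, π₂hat j i * y i)
          + (∑ j, π₁star j * ∑ i, π₂hat j i * z i) := by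
    intro y z
    simp [PiLp.add_apply, mul_add, Finset.sum_add_distrib]
  have lm_smul : ∀ (c : ℝ) (y : EuclideanSpace ℝ (Fin n)),
      (∑ j, π₁star j * ∑ i, π₂hat j i * (c • y) i)
        = c * (∑ j, π₁star j * ∑ i, π₂hat j i * y i) := by
    intro c y
    simp only [PiLp.smul_apply, smul_eq_mul, Finset.mul_sum]
    exact Finset.sum_congr rfl fun j _ =>
      Finset.sum_congr rfl fun i _ => by ring
  let lm : EuclideanSpace ℝ (Fin n) →ₗ[ℝ] ℝ :=
    { toFun := fun y => ∑ j, π₁star j * ∑ i, π₂hat j i * y i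
      map_add' := lm_add
      map_smul' := lm_smul }
  set K : ℝ := (∑ j, π₁star j * f₂star π₂hat j) + f₁star π₁star with hK
  have hL' : ∀ y, L π₁star π₂hat y = lm y - K + u y := by
    intro y
    rw [hL]
    simp only [lm, LinearMap.coe_mk, AddHom.coe_mk, hK, mul_sub,
      Finset.sum_sub_distrib]
    ring
  -- linearity: lm xbar is the weighted average of lm (x (t+1))
  have hlin : lm xbar = W⁻¹ * ∑ t ∈ Finset.range N, w t * lm (x (t + 1)) := by
    rw [hxbar, map_smul, map_sum]
    simp [smul_eq_mul]
  -- Jensen for u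
  have hu' : u xbar ≤ W⁻¹ * ∑ t ∈ Finset.range N, w t * u (x (t + 1)) := by
    have := hu.map_centerMass_le (t := Finset.range N) (w := w)
      (p := fun t => x (t + 1)) (fun i _ => (hw i).le) hWpos
      (fun i _ => Set.mem_univ _)
    simpa [Finset.centerMass, ← hWdef, ← hxbar, smul_eq_mul, Finset.mul_sum,
      Function.comp] using this
  -- Jensen for the Lagrangian
  have hJ : L π₁star π₂hat xbar ≤
      W⁻¹ * ∑ t ∈ Finset.range N, w t * L π₁star π₂hat (x (t + 1)) := by
    have hsum : ∑ t ∈ Finset.range N, w t * L π₁star π₂hat (x (t + 1))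
        = (∑ t ∈ Finset.range N, w t * lm (x (t + 1))) - W * K
          + ∑ t ∈ Finset.range N, w t * u (x (t + 1)) := by
      simp only [hL', mul_sub, mul_add, Finset.sum_sub_distrib,
        Finset.sum_add_distrib, hWdef, Finset.sum_mul]
    rw [hL' xbar, hsum, hlin]
    have hWK : W⁻¹ * ((∑ t ∈ Finset.range N, w t * lm (x (t + 1))) - W * K
        + ∑ t ∈ Finset.range N, w t * u (x (t + 1)))
        = W⁻¹ * (∑ t ∈ Finset.range N, w t * lm (x (t + 1))) - K
          + W⁻¹ * ∑ t ∈ Finset.range N, w t * u (x (t + 1)) := by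
      first
      | (field_simp; ring)
      | field_simp
    rw [hWK]
    linarith [hu']
  -- step 2: average gap bound
  have h2 : L π₁star π₂hat xbar - (f₁ (f₂ xstar) + u xstar) ≤ B / W := by
    have key : ∑ t ∈ Finset.range N,
        w t * (L π₁star π₂hat (x (t + 1)) - (f₁ (f₂ xstar) + u xstar)) ≤ B := by
      refine le_trans (Finset.sum_le_sum fun t _ => ?_) hB
      have := hweak t
      have := (hw t).le
      nlinarith
    have hsplit : ∑ t ∈ Finset.range N,
        w t * (L π₁star π₂hat (x (t + 1)) - (f₁ (f₂ xstar) + u xstar))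
        = (∑ t ∈ Finset.range N, w t * L π₁star π₂hat (x (t + 1)))
          - W * (f₁ (f₂ xstar) + u xstar) := by
      simp only [mul_sub, Finset.sum_sub_distrib, hWdef, Finset.sum_mul]
    have h3 : W⁻¹ * ∑ t ∈ Finset.range N, w t * L π₁star π₂hat (x (t + 1))
        ≤ W⁻¹ * (B + W * (f₁ (f₂ xstar) + u xstar)) := by
      apply mul_le_mul_of_nonneg_left _ (inv_nonneg.mpr hWpos.le)
      linarith [key, hsplit.symm.le]
    have h4 : W⁻¹ * (B + W * (f₁ (f₂ xstar) + u xstar))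
        = B / W + (f₁ (f₂ xstar) + u xstar) := by
      first
      | (field_simp; ring)
      | field_simp
    linarith [hJ, h3, h4.le]
  -- step 1: Bregman bound
  have hLx : L π₁star π₂hat xbar
      = (∑ j, π₁star j * f₂ xbar j) - f₁star π₁star + u xbar := by
    rw [hL]
    simp only [hFY₂]
  have hnsq : ‖f₂ xbar - f₂ xstar‖ ^ 2 ≤ MP₂ ^ 2 * ‖xbar - xstar‖ ^ 2 := by
    nlinarith [hLip₂ xbar xstar, norm_nonneg (f₂ xbar - f₂ xstar),
      norm_nonneg (xbar - xstar)]
  have hbd := hsm (f₂ xbar)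
  have h1 : f₁ (f₂ xbar) + u xbar - L π₁star π₂hat xbar ≤ Lf₁ * MP₂ ^ 2 * C := by
    have e : f₁ (f₂ xbar) + u xbar - L π₁star π₂hat xbar
        = f₁ (f₂ xbar) - f₁ (f₂ xstar)
          - ∑ j, π₁star j * (f₂ xbar j - f₂ xstar j) := by
      rw [hLx, hFY₁]
      simp only [mul_sub, Finset.sum_sub_distrib]
      ring
    have hsub : ∀ j, (f₂ xbar - f₂ xstar) j = f₂ xbar j - f₂ xstar j := fun j => rfl
    have hbd' : f₁ (f₂ xbar) - f₁ (f₂ xstar)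
        - ∑ j, π₁star j * (f₂ xbar j - f₂ xstar j)
        ≤ Lf₁ / 2 * ‖f₂ xbar - f₂ xstar‖ ^ 2 := by
      simpa [hsub] using hbd
    have hmp : 0 ≤ MP₂ ^ 2 := sq_nonneg _
    nlinarith [mul_le_mul_of_nonneg_left hnsq (by positivity : (0:ℝ) ≤ Lf₁ / 2),
      mul_le_mul_of_nonneg_left hC (by positivity : (0:ℝ) ≤ Lf₁ * MP₂ ^ 2)]
  linarith [h1, h2]
end

section
/- Multi-layer weak duality: for the k-layer nested Lagrangian L(π_{1:k}; x) = L₁(π_{1:k}, x) + u(x), defined recursively by L_{k+1} = x and L_i(π_{i:k}, x) = π_i L_{i+1}(π_{i+1:k}, x) − f_i*(π_i), we have f(x) = f₁∘f₂∘⋯∘f_k(x) + u(x) ≥ L(π_{1:k}; x) for all feasible π_i ∈ Π_i, provided for every non-linear layer i the product π₁π₂⋯π_{i−1} is componentwise nonnegative for all feasible choices. -/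
open Finset

/-- The product `π₁ π₂ ⋯ π_i` of the dual matrices (`π_{1:i}` in the paper,
0-indexed here). -/
noncomputable def prodPi (d : ℕ → ℕ)
    (π : ∀ i, Matrix (Fin (d i)) (Fin (d (i + 1))) ℝ) :
    ∀ i, Matrix (Fin (d 0)) (Fin (d i)) ℝ
  | 0 => 1
  | (i + 1) => prodPi d π i * π i

/-- The partial composition of the layer functions: `compF k d f x j` is
`f_{k-j+1} ∘ ⋯ ∘ f_k (x)` (with 1-based paper indexing); at `j = k` it is the full
composition `f₁ ∘ ⋯ ∘ f_k (x)`. -/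
noncomputable def compF (k : ℕ) (d : ℕ → ℕ)
    (f : ∀ i, (Fin (d (i + 1)) → ℝ) → (Fin (d i) → ℝ))
    (x : Fin (d k) → ℝ) : ∀ j : ℕ, Fin (d (k - j)) → ℝ
  | 0 => x
  | (j + 1) =>
    if h : j + 1 ≤ k then
      f (k - (j + 1)) (fun b => compF k d f x j (Fin.cast (congrArg d (by omega)) b))
    else fun _ => 0

/-- The nested Lagrangian `L_i`, defined recursively by `L_{k+1} = x` and
`L_i(π_{i:k}, x) = π_i L_{i+1}(π_{i+1:k}, x) − f_i*(π_i)`; `nestedL k d π fstar x k`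
is `L₁(π_{1:k}, x)`. -/
noncomputable def nestedL (k : ℕ) (d : ℕ → ℕ)
    (π : ∀ i, Matrix (Fin (d i)) (Fin (d (i + 1))) ℝ)
    (fstar : ∀ i, Matrix (Fin (d i)) (Fin (d (i + 1))) ℝ → Fin (d i) → ℝ)
    (x : Fin (d k) → ℝ) : ∀ j : ℕ, Fin (d (k - j)) → ℝ
  | 0 => x
  | (j + 1) =>
    if h : j + 1 ≤ k then
      fun a =>
        (∑ b : Fin (d (k - j)),
          π (k - (j + 1)) a (Fin.cast (congrArg d (by omega)) b) *
            nestedL k d π fstar x j b)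
        - fstar (k - (j + 1)) (π (k - (j + 1))) a
    else fun _ => 0

-- helper: if ∀ t, r * t + s ≥ 0 then r = 0
lemma lin_nonneg_coeff {r s : ℝ} (h : ∀ t : ℝ, 0 ≤ r * t + s) : r = 0 := by
  by_contra hr
  have := h ((-s - 1) / r)
  rw [mul_div_cancel₀ _ hr] at this
  linarith

-- linear layer exactness
lemma linear_exact {m n : ℕ} (f : (Fin n → ℝ) → Fin m → ℝ)
    (Pdom : Set (Matrix (Fin m) (Fin n) ℝ))
    (fstar : Matrix (Fin m) (Fin n) ℝ → Fin m → ℝ)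
    (hub : ∀ (y : Fin n → ℝ), ∀ p ∈ Pdom, ∀ a, f y a ≥ (∑ b, p a b * y b) - fstar p a)
    (hatt : ∀ (y : Fin n → ℝ), ∃ p ∈ Pdom, ∀ a, f y a = (∑ b, p a b * y b) - fstar p a)
    (A : Matrix (Fin m) (Fin n) ℝ) (c : Fin m → ℝ)
    (hA : ∀ (y : Fin n → ℝ) a, f y a = (∑ b, A a b * y b) + c a)
    (p : Matrix (Fin m) (Fin n) ℝ) (hp : p ∈ Pdom) :
    ∀ (y : Fin n → ℝ) a, f y a = (∑ b, p a b * y b) - fstar p a := by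
  have hmat : ∀ q ∈ Pdom, ∀ a b, q a b = A a b := by
    intro q hq a b
    have key : ∀ t : ℝ, 0 ≤ (A a b - q a b) * t + (c a + fstar q a) := by
      intro t
      have h1 := hub (fun b' => if b' = b then t else 0) q hq a
      rw [hA] at h1
      have e1 : ∑ b', A a b' * (if b' = b then t else 0) = A a b * t := by
        rw [Finset.sum_eq_single b] <;> simp +contextual
      have e2 : ∑ b', q a b' * (if b' = b then t else 0) = q a b * t := by
        rw [Finset.sum_eq_single b] <;> simp +contextual
      rw [e1, e2] at h1
      nlinarith [h1]
    have := lin_nonneg_coeff key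
    linarith
  have hfs : ∀ a, fstar p a = -c a := by
    obtain ⟨q, hq, hqe⟩ := hatt 0
    have hqp : q = p := by
      ext a b; rw [hmat q hq a b, hmat p hp a b]
    intro a
    have := hqe a
    rw [hA, hqp] at this
    simp at this
    linarith
  intro y a
  rw [hA, hfs]
  have : ∑ b, p a b * y b = ∑ b, A a b * y b := by
    apply Finset.sum_congr rfl; intro b _; rw [hmat p hp a b]
  rw [this]; ring

lemma prodPi_congr (d : ℕ → ℕ) (π : ∀ i, Matrix (Fin (d i)) (Fin (d (i + 1))) ℝ)
    {n m : ℕ} (h : n = m) (a : Fin (d 0)) (b : Fin (d n)) :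
    prodPi d π n a b = prodPi d π m a (Fin.cast (congrArg d h) b) := by
  subst h; rfl

/-- Multi-layer weak duality: `f₁∘⋯∘f_k(x) + u(x) ≥ L(π_{1:k}; x)` for all feasible
`π_i ∈ Π_i`, provided for every non-linear layer `i` the product `π₁⋯π_{i−1}` is
componentwise nonnegative. -/
theorem stmt_11 (k : ℕ) (d : ℕ → ℕ) (hd0 : d 0 = 1)
    (f : ∀ i, (Fin (d (i + 1)) → ℝ) → (Fin (d i) → ℝ))
    (u : (Fin (d k) → ℝ) → ℝ)
    (Pdom : ∀ i, Set (Matrix (Fin (d i)) (Fin (d (i + 1))) ℝ))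
    (fstar : ∀ i, Matrix (Fin (d i)) (Fin (d (i + 1))) ℝ → Fin (d i) → ℝ)
    -- biconjugation, upper-bound direction: f_i(y) ≥ π y − f_i*(π) for π ∈ Π_i
    (hub : ∀ i, i < k → ∀ (y : Fin (d (i + 1)) → ℝ), ∀ p ∈ Pdom i, ∀ a,
      f i y a ≥ (∑ b, p a b * y b) - fstar i p a)
    -- biconjugation, attainment: the max is attained by some dual matrix in Π_i
    (hatt : ∀ i, i < k → ∀ (y : Fin (d (i + 1)) → ℝ), ∃ p ∈ Pdom i, ∀ a,
      f i y a = (∑ b, p a b * y b) - fstar i p a)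
    (x : Fin (d k) → ℝ)
    (π : ∀ i, Matrix (Fin (d i)) (Fin (d (i + 1))) ℝ)
    (hπ : ∀ i, i < k → π i ∈ Pdom i)
    -- compositional monotonicity: for every non-linear layer i, π_{1:i-1} ≥ 0
    (hmono : ∀ i, i < k →
      (¬ ∃ (A : Matrix (Fin (d i)) (Fin (d (i + 1))) ℝ) (c : Fin (d i) → ℝ),
        ∀ (y : Fin (d (i + 1)) → ℝ) a, f i y a = (∑ b, A a b * y b) + c a) →
      ∀ a b, 0 ≤ prodPi d π i a b) :
    ∀ a, compF k d f x k a + u x ≥ nestedL k d π fstar x k a + u x := by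
  have key : ∀ j, j ≤ k → ∀ a : Fin (d 0),
      ∑ b, prodPi d π (k - j) a b * nestedL k d π fstar x j b
        ≤ ∑ b, prodPi d π (k - j) a b * compF k d f x j b := by
    intro j
    induction j with
    | zero => intro _ a; exact le_refl _
    | succ j ih =>
      intro hj a
      have hjk : j ≤ k := Nat.le_of_succ_le hj
      have hik : k - (j + 1) < k := by omega
      have hkj : k - j = (k - (j + 1)) + 1 := by omega
      have hLs : ∀ c, nestedL k d π fstar x (j + 1) c =
          (∑ b : Fin (d (k - j)),
            π (k - (j + 1)) c (Fin.cast (congrArg d hkj) b) * nestedL k d π fstar x j b)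
          - fstar (k - (j + 1)) (π (k - (j + 1))) c := by
        intro c
        rw [nestedL, dif_pos hj]
      have hFs : ∀ c, compF k d f x (j + 1) c =
          f (k - (j + 1))
            (fun b => compF k d f x j (Fin.cast (congrArg d hkj.symm) b)) c := by
        intro c
        rw [compF, dif_pos hj]
      have hPP : ∀ b : Fin (d (k - j)), prodPi d π (k - j) a b =
          ∑ c, prodPi d π (k - (j + 1)) a c *
            π (k - (j + 1)) c (Fin.cast (congrArg d hkj) b) := by
        intro b
        rw [prodPi_congr d π hkj a b]
        show prodPi d π ((k - (j + 1)) + 1) a _ = _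
        show (prodPi d π (k - (j + 1)) * π (k - (j + 1))) a _ = _
        rw [Matrix.mul_apply]
      have gen : ∀ v : Fin (d (k - j)) → ℝ,
          ∑ c, prodPi d π (k - (j + 1)) a c *
            ((∑ b : Fin (d (k - j)),
              π (k - (j + 1)) c (Fin.cast (congrArg d hkj) b) * v b)
             - fstar (k - (j + 1)) (π (k - (j + 1))) c)
          = (∑ b, prodPi d π (k - j) a b * v b)
            - ∑ c, prodPi d π (k - (j + 1)) a c *
                fstar (k - (j + 1)) (π (k - (j + 1))) c := by
        intro v
        simp only [mul_sub]
        rw [Finset.sum_sub_distrib]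
        congr 1
        simp only [Finset.mul_sum]
        rw [Finset.sum_comm]
        apply Finset.sum_congr rfl
        intro b _
        rw [hPP b, Finset.sum_mul]
        apply Finset.sum_congr rfl
        intro c _
        ring
      set y : Fin (d ((k - (j + 1)) + 1)) → ℝ :=
        fun b => compF k d f x j (Fin.cast (congrArg d hkj.symm) b) with hy
      have hsum_y : ∀ c, ∑ b : Fin (d (k - j)),
          π (k - (j + 1)) c (Fin.cast (congrArg d hkj) b) * compF k d f x j b
          = ∑ b, π (k - (j + 1)) c b * y b := by
        intro c
        exact Fintype.sum_equiv (finCongr (congrArg d hkj)) _ _ (fun b => rfl)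
      calc ∑ c, prodPi d π (k - (j + 1)) a c * nestedL k d π fstar x (j + 1) c
          = (∑ b, prodPi d π (k - j) a b * nestedL k d π fstar x j b)
            - ∑ c, prodPi d π (k - (j + 1)) a c *
                fstar (k - (j + 1)) (π (k - (j + 1))) c := by
            rw [← gen]
            exact Finset.sum_congr rfl fun c _ => by rw [hLs]
        _ ≤ (∑ b, prodPi d π (k - j) a b * compF k d f x j b)
            - ∑ c, prodPi d π (k - (j + 1)) a c *
                fstar (k - (j + 1)) (π (k - (j + 1))) c := by
            have := ih hjk a
            linarith
        _ = ∑ c, prodPi d π (k - (j + 1)) a c *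
              ((∑ b, π (k - (j + 1)) c b * y b)
               - fstar (k - (j + 1)) (π (k - (j + 1))) c) := by
            rw [← gen (compF k d f x j)]
            exact Finset.sum_congr rfl fun c _ => by rw [hsum_y]
        _ ≤ ∑ c, prodPi d π (k - (j + 1)) a c * compF k d f x (j + 1) c := by
            by_cases hlin : ∃ (A : Matrix (Fin (d (k - (j + 1)))) (Fin (d ((k - (j + 1)) + 1))) ℝ)
                (c0 : Fin (d (k - (j + 1))) → ℝ),
                ∀ (z : Fin (d ((k - (j + 1)) + 1)) → ℝ) a,
                  f (k - (j + 1)) z a = (∑ b, A a b * z b) + c0 a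
            · obtain ⟨A, c0, hA⟩ := hlin
              apply le_of_eq
              apply Finset.sum_congr rfl
              intro c _
              rw [hFs c]
              rw [linear_exact (f (k - (j + 1))) (Pdom (k - (j + 1))) (fstar (k - (j + 1)))
                (hub _ hik) (hatt _ hik) A c0 hA (π (k - (j + 1))) (hπ _ hik) y c]
            · apply Finset.sum_le_sum
              intro c _
              rw [hFs c]
              exact mul_le_mul_of_nonneg_left
                (hub _ hik y (π (k - (j + 1))) (hπ _ hik) c)
                (hmono _ hik hlin a c)
  intro a
  have hkk : k - k = 0 := Nat.sub_self k
  have hd1 : d (k - k) = 1 := by rw [hkk]; exact hd0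
  haveI s1 : Subsingleton (Fin (d (k - k))) := by rw [hd1]; infer_instance
  haveI s0 : Subsingleton (Fin (d 0)) := by rw [hd0]; infer_instance
  have h1 := key k le_rfl (Fin.cast (congrArg d hkk) a)
  rw [Fintype.sum_subsingleton _ a, Fintype.sum_subsingleton _ a] at h1
  have hP1 : prodPi d π (k - k) (Fin.cast (congrArg d hkk) a) a = 1 := by
    rw [prodPi_congr d π hkk]
    show (1 : Matrix (Fin (d 0)) (Fin (d 0)) ℝ) _ _ = 1
    rw [Subsingleton.elim (Fin.cast (congrArg d hkk) a) (Fin.cast (congrArg d hkk) a)]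
    rw [Matrix.one_apply_eq]
  rw [hP1, one_mul, one_mul] at h1
  linarith
end

section
/- Smoothness-gap bound via nested subgradients: if f₁,…,f_{i−1} are Lipschitz-smooth with constants L_{f₁},…,L_{f_{i−1}} and each f_j is M_{Π_j}-Lipschitz, then for any x̄, x*, with π̂_l ∈ ∂f_l(f_{l+1:}(x̄)) and π*_l ∈ ∂f_l(f_{l+1:}(x*)), Σ_{l=1}^{i−1} π*_{1:l−1} D_{f_l}(f_{l+1:}(x*), f_{l+1:}(x̄)) ≤ (1/2)(Σ_{l=1}^{i−1} M_{Π_{1:l−1}} L_{f_l} M_{Π_{l+1:}}²) ‖x̄ − x*‖², where π*_{1:l−1} ≥ 0 componentwise and M_{Π_{1:l−1}}, M_{Π_{l+1:}} bound ‖π*_{1:l−1}‖ and the Lipschitz constant of f_{l+1:} respectively. -/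
open Finset

/-- `compAt k d f x i` is the inner composition `f_{i+1:k}(x)` as a vector indexed by
`Fin (d (i+1))`. -/
noncomputable def compAt (k : ℕ) (d : ℕ → ℕ)
    (f : ∀ i, (Fin (d (i + 1)) → ℝ) → (Fin (d i) → ℝ))
    (x : Fin (d k) → ℝ) (i : ℕ) : Fin (d (i + 1)) → ℝ :=
  fun b =>
    if h : i + 1 ≤ k then
      compF k d f x (k - (i + 1)) (Fin.cast (congrArg d (by omega)) b)
    else 0

/-- Smoothness-gap bound via nested subgradients:
`Σ_{l<i} π*_{1:l−1} D_{f_l}(f_{l+1:}(x*), f_{l+1:}(x̄))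
  ≤ (1/2)(Σ_{l<i} M_{Π_{1:l−1}} L_{f_l} M_{Π_{l+1:}}²) ‖x̄ − x*‖²`. -/
theorem stmt_13 (k : ℕ) (d : ℕ → ℕ) (hd0 : d 0 = 1)
    (iLay : ℕ) (hiLay : iLay ≤ k)
    (f : ∀ i, (Fin (d (i + 1)) → ℝ) → (Fin (d i) → ℝ))
    (π : ∀ i, Matrix (Fin (d i)) (Fin (d (i + 1))) ℝ)
    (Lf Mp Mq : ℕ → ℝ)
    (xbar xstar : Fin (d k) → ℝ)
    (hLf : ∀ l, 0 ≤ Lf l)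
    -- L_{f_l}-smoothness: Bregman distances of f_l are bounded by (L_{f_l}/2)·dist²
    (hsm : ∀ l, l < iLay → ∀ (y y' : Fin (d (l + 1)) → ℝ)
      (G : Matrix (Fin (d l)) (Fin (d (l + 1))) ℝ),
      (∀ a (y'' : Fin (d (l + 1)) → ℝ),
        f l y'' a ≥ f l y a + ∑ b, G a b * (y'' b - y b)) →
      ∀ a, f l y' a - f l y a - (∑ b, G a b * (y' b - y b)) ≤
        Lf l / 2 * ∑ b, (y' b - y b) ^ 2)
    -- π_l* ∈ ∂f_l(f_{l+1:}(x*)), componentwise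
    (hsub : ∀ l, l < iLay → ∀ a (y'' : Fin (d (l + 1)) → ℝ),
      f l y'' a ≥ f l (compAt k d f xstar l) a +
        ∑ b, π l a b * (y'' b - compAt k d f xstar l b))
    -- π*_{1:l−1} is componentwise nonnegative
    (hnn : ∀ l, l < iLay → ∀ a b, 0 ≤ prodPi d π l a b)
    -- M_{Π_{1:l−1}} bounds ‖π*_{1:l−1}‖
    (hMp : ∀ l, l < iLay → ∀ a, (∑ b, prodPi d π l a b) ≤ Mp l)
    -- M_{Π_{l+1:}} is a Lipschitz constant of the composition f_{l+1:}
    (hMq : ∀ l, l < iLay → ∀ x1 x2 : Fin (d k) → ℝ,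
      (∑ b, (compAt k d f x1 l b - compAt k d f x2 l b) ^ 2) ≤
        (Mq l) ^ 2 * ∑ b', (x1 b' - x2 b') ^ 2) :
    ∑ l ∈ Finset.range iLay,
      ∑ a, ∑ c, prodPi d π l a c *
        (f l (compAt k d f xbar l) c - f l (compAt k d f xstar l) c -
          ∑ b, π l c b * (compAt k d f xbar l b - compAt k d f xstar l b)) ≤
      (1 / 2) * (∑ l ∈ Finset.range iLay, Mp l * Lf l * (Mq l) ^ 2) *
        ∑ b', (xbar b' - xstar b') ^ 2 := by

  set S := ∑ b', (xbar b' - xstar b') ^ 2 with hS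
  have hS0 : 0 ≤ S := Finset.sum_nonneg fun _ _ => sq_nonneg _
  clear_value S
  have key : ∀ l ∈ Finset.range iLay,
      (∑ a, ∑ c, prodPi d π l a c *
        (f l (compAt k d f xbar l) c - f l (compAt k d f xstar l) c -
          ∑ b, π l c b * (compAt k d f xbar l b - compAt k d f xstar l b))) ≤
      1 / 2 * (Mp l * Lf l * (Mq l) ^ 2) * S := by
    intro l hl
    rw [Finset.mem_range] at hl
    have hC0 : 0 ≤ Lf l / 2 * ((Mq l) ^ 2 * S) :=
      mul_nonneg (div_nonneg (hLf l) (by norm_num)) (mul_nonneg (sq_nonneg _) hS0)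
    have hterm : ∀ c, f l (compAt k d f xbar l) c - f l (compAt k d f xstar l) c -
        ∑ b, π l c b * (compAt k d f xbar l b - compAt k d f xstar l b) ≤
        Lf l / 2 * ((Mq l) ^ 2 * S) := by
      intro c
      have h1 := hsm l hl (compAt k d f xstar l) (compAt k d f xbar l) (π l)
        (hsub l hl) c
      have h2 : (∑ b, (compAt k d f xbar l b - compAt k d f xstar l b) ^ 2) ≤
          (Mq l) ^ 2 * S := by rw [hS]; exact hMq l hl xbar xstar
      calc f l (compAt k d f xbar l) c - f l (compAt k d f xstar l) c -
            ∑ b, π l c b * (compAt k d f xbar l b - compAt k d f xstar l b)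
          ≤ Lf l / 2 * ∑ b, (compAt k d f xbar l b - compAt k d f xstar l b) ^ 2 := h1
        _ ≤ Lf l / 2 * ((Mq l) ^ 2 * S) := by
            apply mul_le_mul_of_nonneg_left h2 (div_nonneg (hLf l) (by norm_num))
    have hinner : ∀ a, (∑ c, prodPi d π l a c *
        (f l (compAt k d f xbar l) c - f l (compAt k d f xstar l) c -
          ∑ b, π l c b * (compAt k d f xbar l b - compAt k d f xstar l b))) ≤
        Mp l * (Lf l / 2 * ((Mq l) ^ 2 * S)) := by
      intro a
      calc (∑ c, prodPi d π l a c *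
            (f l (compAt k d f xbar l) c - f l (compAt k d f xstar l) c -
              ∑ b, π l c b * (compAt k d f xbar l b - compAt k d f xstar l b)))
          ≤ ∑ c, prodPi d π l a c * (Lf l / 2 * ((Mq l) ^ 2 * S)) := by
            apply Finset.sum_le_sum
            intro c _
            exact mul_le_mul_of_nonneg_left (hterm c) (hnn l hl a c)
        _ = (∑ c, prodPi d π l a c) * (Lf l / 2 * ((Mq l) ^ 2 * S)) := by
            rw [Finset.sum_mul]
        _ ≤ Mp l * (Lf l / 2 * ((Mq l) ^ 2 * S)) :=
            mul_le_mul_of_nonneg_right (hMp l hl a) hC0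
    calc (∑ a, ∑ c, prodPi d π l a c *
          (f l (compAt k d f xbar l) c - f l (compAt k d f xstar l) c -
            ∑ b, π l c b * (compAt k d f xbar l b - compAt k d f xstar l b)))
        ≤ ∑ _a : Fin (d 0), Mp l * (Lf l / 2 * ((Mq l) ^ 2 * S)) :=
          Finset.sum_le_sum fun a _ => hinner a
      _ = (d 0 : ℝ) * (Mp l * (Lf l / 2 * ((Mq l) ^ 2 * S))) := by
          rw [Finset.sum_const, Finset.card_univ, Fintype.card_fin]
          simp [nsmul_eq_mul]
      _ = 1 / 2 * (Mp l * Lf l * (Mq l) ^ 2) * S := by rw [hd0]; push_cast; ring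
  calc (∑ l ∈ Finset.range iLay,
        ∑ a, ∑ c, prodPi d π l a c *
          (f l (compAt k d f xbar l) c - f l (compAt k d f xstar l) c -
            ∑ b, π l c b * (compAt k d f xbar l b - compAt k d f xstar l b)))
      ≤ ∑ l ∈ Finset.range iLay, 1 / 2 * (Mp l * Lf l * (Mq l) ^ 2) * S :=
        Finset.sum_le_sum key
    _ = (1 / 2) * (∑ l ∈ Finset.range iLay, Mp l * Lf l * (Mq l) ^ 2) * S := by
        rw [Finset.mul_sum, Finset.sum_mul]
end

section
/- Conjugate restriction identity for associated dual points: let g : ℝⁿ → ℝᵐ have convex L_g-smooth components, let w ∈ ℝ₊ᵐ with ‖w‖ = 1, and let g_w(y) := wᵀ g(y) with conjugate g_w*. Then for any π = g'(y*) (a Jacobian evaluated at some y*), g_w*(wᵀπ) = wᵀ g*(π), where g*(π) is the vector of componentwise conjugates g_j*(π_j) evaluated at the rows π_j of π. In general only g_w*(wᵀπ) ≤ wᵀ g*(π) holds for arbitrary π. -/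
open Finset

/-- Conjugate restriction identity for associated dual points: let `g : ℝⁿ → ℝᵐ` have
convex `L_g`-smooth components, `w ∈ ℝ₊ᵐ` with `‖w‖ = 1`, and `g_w(y) = wᵀg(y)` with
conjugate `g_w*`. For `π = g'(y*)` (a Jacobian at a common primal point `y*`),
`g_w*(wᵀπ) = wᵀ g*(π)` and the supremum is attained, while for arbitrary `π` only
`g_w*(wᵀπ) ≤ wᵀ g*(π)` holds. -/
theorem stmt_16 {n m : ℕ}
    (g : EuclideanSpace ℝ (Fin n) → Fin m → ℝ)
    (J : EuclideanSpace ℝ (Fin n) → Fin m → EuclideanSpace ℝ (Fin n))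
    (Lg : ℝ) (hLg : 0 < Lg)
    (hconv : ∀ j, ConvexOn ℝ Set.univ (fun y => g y j))
    (hgrad : ∀ y j, HasGradientAt (fun x => g x j) (J y j) y)
    -- L_g-smoothness of each component
    (hsm : ∀ y ybar j, ‖J y j - J ybar j‖ ≤ Lg * ‖y - ybar‖)
    (w : Fin m → ℝ) (hw : ∀ j, 0 ≤ w j) (hwnorm : Real.sqrt (∑ j, (w j) ^ 2) = 1)
    -- componentwise conjugates: Fenchel–Young equality at gradient points …
    (gstar : Fin m → EuclideanSpace ℝ (Fin n) → ℝ)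
    (hFY : ∀ j y, gstar j (J y j) = (inner ℝ (J y j) y : ℝ) - g y j)
    -- … and domination elsewhere (gstar j is the conjugate of g · j)
    (hdom : ∀ j (p : EuclideanSpace ℝ (Fin n)) (y : EuclideanSpace ℝ (Fin n)),
      (inner ℝ p y : ℝ) - g y j ≤ gstar j p)
    (ystar : EuclideanSpace ℝ (Fin n)) :
    -- g_w*(wᵀπ) = wᵀ g*(π) for the associated π = g'(y*), with attainment
    IsGreatest
      (Set.range fun y =>
        (inner ℝ (∑ j, w j • J ystar j) y : ℝ) - ∑ j, w j * g y j)
      (∑ j, w j * gstar j (J ystar j))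
    ∧
    -- in general only g_w*(wᵀπ) ≤ wᵀ g*(π)
    (∀ (p : Fin m → EuclideanSpace ℝ (Fin n)) (y : EuclideanSpace ℝ (Fin n)),
      (inner ℝ (∑ j, w j • p j) y : ℝ) - ∑ j, w j * g y j ≤
        ∑ j, w j * gstar j (p j)) := by
  have key : ∀ (p : Fin m → EuclideanSpace ℝ (Fin n)) (y : EuclideanSpace ℝ (Fin n)),
      (inner ℝ (∑ j, w j • p j) y : ℝ) - ∑ j, w j * g y j ≤
        ∑ j, w j * gstar j (p j) := by
    intro p y
    have h1 : (inner ℝ (∑ j, w j • p j) y : ℝ) = ∑ j, w j * (inner ℝ (p j) y : ℝ) := by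
      rw [sum_inner]
      exact Finset.sum_congr rfl fun j _ => real_inner_smul_left _ _ _
    rw [h1, ← Finset.sum_sub_distrib]
    refine Finset.sum_le_sum fun j _ => ?_
    rw [← mul_sub]
    exact mul_le_mul_of_nonneg_left (hdom j (p j) y) (hw j)
  refine ⟨⟨⟨ystar, ?_⟩, ?_⟩, key⟩
  · have h1 : (inner ℝ (∑ j, w j • J ystar j) ystar : ℝ)
        = ∑ j, w j * (inner ℝ (J ystar j) ystar : ℝ) := by
      rw [sum_inner]
      exact Finset.sum_congr rfl fun j _ => real_inner_smul_left _ _ _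
    dsimp only
    rw [h1, ← Finset.sum_sub_distrib]
    refine Finset.sum_congr rfl fun j _ => ?_
    rw [hFY j ystar, mul_sub]
  · rintro x ⟨y, rfl⟩
    exact key _ y
end

section
/- Strong-convexity weighted descent recursion: let α > 0, ηᵗ = (t+1)α/3 and wᵗ = (t+1)/2. If for all t, A₀ᵗ ≤ (ηᵗ/2)‖xᵗ − x‖² − ((ηᵗ+α)/2)‖xᵗ⁺¹ − x‖² − (ηᵗ/2)‖xᵗ − xᵗ⁺¹‖², then Σ_{t=0}^{N−1} wᵗ A₀ᵗ ≤ (α/12)‖x⁰ − x‖² − (N(N+3)α/12)‖xᴺ − x‖² − Σ_{t=0}^{N−1} ((t+1)α/6) wᵗ ‖xᵗ⁺¹ − xᵗ‖². -/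
open Finset

/-- Strong-convexity weighted descent recursion: with `α > 0`, `ηᵗ = (t+1)α/3`,
`wᵗ = (t+1)/2`, if for all `t < N`
`A₀ᵗ ≤ (ηᵗ/2)‖xᵗ − x‖² − ((ηᵗ+α)/2)‖xᵗ⁺¹ − x‖² − (ηᵗ/2)‖xᵗ − xᵗ⁺¹‖²`, then
`Σ_{t<N} wᵗ A₀ᵗ ≤ (α/12)‖x⁰ − x‖² − (N(N+3)α/12)‖xᴺ − x‖²
  − Σ_{t<N} ((t+1)α/6) wᵗ ‖xᵗ⁺¹ − xᵗ‖²`. -/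
theorem stmt_19 {E : Type*} [NormedAddCommGroup E]
    (α : ℝ) (hα : 0 < α) (N : ℕ)
    (x : ℕ → E) (y : E)
    (η w : ℕ → ℝ)
    (hη : ∀ t, η t = ((t : ℝ) + 1) * α / 3)
    (hw : ∀ t, w t = ((t : ℝ) + 1) / 2)
    (A : ℕ → ℝ)
    (hA : ∀ t < N, A t ≤
      η t / 2 * ‖x t - y‖ ^ 2 - (η t + α) / 2 * ‖x (t + 1) - y‖ ^ 2 -
        η t / 2 * ‖x t - x (t + 1)‖ ^ 2) :
    ∑ t ∈ Finset.range N, w t * A t ≤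
      α / 12 * ‖x 0 - y‖ ^ 2 - (N * (N + 3) * α / 12) * ‖x N - y‖ ^ 2 -
        ∑ t ∈ Finset.range N, (((t : ℝ) + 1) * α / 6) * w t * ‖x (t + 1) - x t‖ ^ 2 := by
  rcases Nat.eq_zero_or_pos N with h0 | hpos
  · subst h0
    simp only [Finset.range_zero, Finset.sum_empty, Nat.cast_zero]
    have : (0:ℝ) ≤ ‖x 0 - y‖ ^ 2 := by positivity
    nlinarith
  · induction N, hpos using Nat.le_induction with
    | base =>
      have hA0 := hA 0 (by norm_num)
      simp only [Finset.range_one, Finset.sum_singleton, Nat.cast_zero, Nat.cast_one,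
        hη, hw, norm_sub_rev (x 1) (x 0)] at *
      nlinarith
    | succ N hN ih =>
      have hA' : ∀ t < N, A t ≤
          η t / 2 * ‖x t - y‖ ^ 2 - (η t + α) / 2 * ‖x (t + 1) - y‖ ^ 2 -
            η t / 2 * ‖x t - x (t + 1)‖ ^ 2 := fun t ht => hA t (ht.trans (Nat.lt_succ_self N))
      have IH := ih hA'
      have hAN := hA N (Nat.lt_succ_self N)
      rw [Finset.sum_range_succ, Finset.sum_range_succ]
      have hkey : w N * A N ≤
          w N * (η N / 2 * ‖x N - y‖ ^ 2 - (η N + α) / 2 * ‖x (N + 1) - y‖ ^ 2 -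
            η N / 2 * ‖x N - x (N + 1)‖ ^ 2) := by
        have hwN : 0 ≤ w N := by rw [hw]; positivity
        exact mul_le_mul_of_nonneg_left hAN hwN
      have hN' : (1:ℝ) ≤ (N:ℝ) := by exact_mod_cast hN
      have hx : (0:ℝ) ≤ ‖x N - y‖ ^ 2 := by positivity
      have hnormeq : ‖x (N + 1) - x N‖ = ‖x N - x (N + 1)‖ := norm_sub_rev _ _
      simp only [hη, hw, Nat.cast_succ, hnormeq] at *
      push_cast at *
      nlinarith [IH, hkey, mul_nonneg (sub_nonneg.2 hN') hx, hα.le]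
end
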